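/- arXiv:math/0701510 — 5 statements merged into one kernel-verified Lean document; each statement's English description precedes it below -/
import Mathlib

section
/- Let f : ℍ → ℍ be of class C² on an open set Ω of quaternions with nonzero imaginary part, and suppose f can be written as f(p) = u(p) + ι(p)·v(p) with u, v real-valued, and that f satisfies D_l f = −2v/r on Ω. Then the Laplacian of f is both left- and right-regular on Ω, i.e. D_l(Δf) = 0 and D_r(Δf) = 0 on Ω. -/
open Quaternion

noncomputable section

/-- The basis quaternion `i`. -/
def qi : ℍ[ℝ] := ⟨0,1,0,0⟩
/-- The basis quaternion `j`. -/
def qj : ℍ[ℝ] := ⟨0,0,1,0⟩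
/-- The basis quaternion `k`. -/
def qk : ℍ[ℝ] := ⟨0,0,0,1⟩

/-- Partial derivative of `f : ℍ → ℍ` in the real (`t`) direction. -/
def pt (f : ℍ[ℝ] → ℍ[ℝ]) (p : ℍ[ℝ]) : ℍ[ℝ] := fderiv ℝ f p 1
/-- Partial derivative in the `i` (`x`) direction. -/
def px (f : ℍ[ℝ] → ℍ[ℝ]) (p : ℍ[ℝ]) : ℍ[ℝ] := fderiv ℝ f p qi
/-- Partial derivative in the `j` (`y`) direction. -/
def py (f : ℍ[ℝ] → ℍ[ℝ]) (p : ℍ[ℝ]) : ℍ[ℝ] := fderiv ℝ f p qj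
/-- Partial derivative in the `k` (`z`) direction. -/
def pz (f : ℍ[ℝ] → ℍ[ℝ]) (p : ℍ[ℝ]) : ℍ[ℝ] := fderiv ℝ f p qk

/-- The left Fueter operator `D_l f = ∂f/∂t + i ∂f/∂x + j ∂f/∂y + k ∂f/∂z`. -/
def Dl (f : ℍ[ℝ] → ℍ[ℝ]) (p : ℍ[ℝ]) : ℍ[ℝ] :=
  pt f p + qi * px f p + qj * py f p + qk * pz f p
/-- The right Fueter operator `D_r f = ∂f/∂t + (∂f/∂x) i + (∂f/∂y) j + (∂f/∂z) k`. -/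
def Dr (f : ℍ[ℝ] → ℍ[ℝ]) (p : ℍ[ℝ]) : ℍ[ℝ] :=
  pt f p + px f p * qi + py f p * qj + pz f p * qk
/-- The conjugate left Fueter operator `D̄_l f = ∂f/∂t - i ∂f/∂x - j ∂f/∂y - k ∂f/∂z`. -/
def Dlbar (f : ℍ[ℝ] → ℍ[ℝ]) (p : ℍ[ℝ]) : ℍ[ℝ] :=
  pt f p - qi * px f p - qj * py f p - qk * pz f p
/-- The Laplacian `Δf = ∂²f/∂t² + ∂²f/∂x² + ∂²f/∂y² + ∂²f/∂z²`. -/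
def Lap (f : ℍ[ℝ] → ℍ[ℝ]) (p : ℍ[ℝ]) : ℍ[ℝ] :=
  pt (pt f) p + px (px f) p + py (py f) p + pz (pz f) p

/-- `r = √(x² + y² + z²)`, the norm of the imaginary part of `p`. -/
def rad (p : ℍ[ℝ]) : ℝ := Real.sqrt (p.imI^2 + p.imJ^2 + p.imK^2)
/-- `ι(p) = (x i + y j + z k)/r`, the normalized imaginary part of `p`. -/
def iot (p : ℍ[ℝ]) : ℍ[ℝ] := (rad p)⁻¹ • Quaternion.im p

/-! ### Auxiliary machinery -/

/-- Scalar directional derivative. -/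
def DD (d : ℍ[ℝ]) (F : ℍ[ℝ] → ℝ) (p : ℍ[ℝ]) : ℝ := fderiv ℝ F p d

def reC : ℍ[ℝ] →L[ℝ] ℝ := LinearMap.toContinuousLinearMap (QuaternionAlgebra.reₗ (-1) 0 (-1))
def imIC : ℍ[ℝ] →L[ℝ] ℝ := LinearMap.toContinuousLinearMap (QuaternionAlgebra.imIₗ (-1) 0 (-1))
def imJC : ℍ[ℝ] →L[ℝ] ℝ := LinearMap.toContinuousLinearMap (QuaternionAlgebra.imJₗ (-1) 0 (-1))
def imKC : ℍ[ℝ] →L[ℝ] ℝ := LinearMap.toContinuousLinearMap (QuaternionAlgebra.imKₗ (-1) 0 (-1))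

@[simp] lemma qi_re : qi.re = 0 := rfl
@[simp] lemma qi_imI : qi.imI = 1 := rfl
@[simp] lemma qi_imJ : qi.imJ = 0 := rfl
@[simp] lemma qi_imK : qi.imK = 0 := rfl
@[simp] lemma qj_re : qj.re = 0 := rfl
@[simp] lemma qj_imI : qj.imI = 0 := rfl
@[simp] lemma qj_imJ : qj.imJ = 1 := rfl
@[simp] lemma qj_imK : qj.imK = 0 := rfl
@[simp] lemma qk_re : qk.re = 0 := rfl
@[simp] lemma qk_imI : qk.imI = 0 := rfl
@[simp] lemma qk_imJ : qk.imJ = 0 := rfl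
@[simp] lemma qk_imK : qk.imK = 1 := rfl

lemma clm_fderiv_apply {E' G : Type*} [NormedAddCommGroup E'] [NormedSpace ℝ E']
    [NormedAddCommGroup G] [NormedSpace ℝ G] (π : E' →L[ℝ] G) {F : ℍ[ℝ] → E'} {p : ℍ[ℝ]}
    (h : DifferentiableAt ℝ F p) (d : ℍ[ℝ]) :
    fderiv ℝ (fun q => π (F q)) p d = π (fderiv ℝ F p d) := by
  rw [show (fun q => π (F q)) = π ∘ F from rfl,
    fderiv_comp p π.differentiableAt h, π.fderiv]
  rfl

lemma fd_re {f : ℍ[ℝ] → ℍ[ℝ]} {p : ℍ[ℝ]} (h : DifferentiableAt ℝ f p) (d : ℍ[ℝ]) :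
    (fderiv ℝ f p d).re = DD d (fun q => (f q).re) p := (clm_fderiv_apply reC h d).symm
lemma fd_imI {f : ℍ[ℝ] → ℍ[ℝ]} {p : ℍ[ℝ]} (h : DifferentiableAt ℝ f p) (d : ℍ[ℝ]) :
    (fderiv ℝ f p d).imI = DD d (fun q => (f q).imI) p := (clm_fderiv_apply imIC h d).symm
lemma fd_imJ {f : ℍ[ℝ] → ℍ[ℝ]} {p : ℍ[ℝ]} (h : DifferentiableAt ℝ f p) (d : ℍ[ℝ]) :
    (fderiv ℝ f p d).imJ = DD d (fun q => (f q).imJ) p := (clm_fderiv_apply imJC h d).symm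
lemma fd_imK {f : ℍ[ℝ] → ℍ[ℝ]} {p : ℍ[ℝ]} (h : DifferentiableAt ℝ f p) (d : ℍ[ℝ]) :
    (fderiv ℝ f p d).imK = DD d (fun q => (f q).imK) p := (clm_fderiv_apply imKC h d).symm

lemma DD_coordI (p d : ℍ[ℝ]) : DD d (fun q => q.imI) p = d.imI := by
  show fderiv ℝ (fun q => imIC q) p d = d.imI
  rw [show (fun q : ℍ[ℝ] => imIC q) = (imIC : ℍ[ℝ] → ℝ) from rfl, imIC.fderiv]; rfl
lemma DD_coordJ (p d : ℍ[ℝ]) : DD d (fun q => q.imJ) p = d.imJ := by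
  show fderiv ℝ (fun q => imJC q) p d = d.imJ
  rw [show (fun q : ℍ[ℝ] => imJC q) = (imJC : ℍ[ℝ] → ℝ) from rfl, imJC.fderiv]; rfl
lemma DD_coordK (p d : ℍ[ℝ]) : DD d (fun q => q.imK) p = d.imK := by
  show fderiv ℝ (fun q => imKC q) p d = d.imK
  rw [show (fun q : ℍ[ℝ] => imKC q) = (imKC : ℍ[ℝ] → ℝ) from rfl, imKC.fderiv]; rfl

lemma diffAt_coordI (p : ℍ[ℝ]) : DifferentiableAt ℝ (fun q : ℍ[ℝ] => q.imI) p :=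
  imIC.differentiableAt
lemma diffAt_coordJ (p : ℍ[ℝ]) : DifferentiableAt ℝ (fun q : ℍ[ℝ] => q.imJ) p :=
  imJC.differentiableAt
lemma diffAt_coordK (p : ℍ[ℝ]) : DifferentiableAt ℝ (fun q : ℍ[ℝ] => q.imK) p :=
  imKC.differentiableAt

lemma fderiv_congr_on {E' : Type*} [NormedAddCommGroup E'] [NormedSpace ℝ E']
    {Ω : Set ℍ[ℝ]} (hΩ : IsOpen Ω) {p : ℍ[ℝ]} (hp : p ∈ Ω)
    {F G' : ℍ[ℝ] → E'} (h : ∀ q ∈ Ω, F q = G' q) :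
    fderiv ℝ F p = fderiv ℝ G' p :=
  Filter.EventuallyEq.fderiv_eq (by filter_upwards [hΩ.mem_nhds hp] using h)

lemma DD_congr {Ω : Set ℍ[ℝ]} (hΩ : IsOpen Ω) {p : ℍ[ℝ]} (hp : p ∈ Ω)
    {F G' : ℍ[ℝ] → ℝ} (h : ∀ q ∈ Ω, F q = G' q) (d : ℍ[ℝ]) :
    DD d F p = DD d G' p := by
  unfold DD; rw [fderiv_congr_on hΩ hp h]

lemma diffAt_of_C2 {E' : Type*} [NormedAddCommGroup E'] [NormedSpace ℝ E']
    {Ω : Set ℍ[ℝ]} (hΩ : IsOpen Ω) {p : ℍ[ℝ]} (hp : p ∈ Ω)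
    {F : ℍ[ℝ] → E'} (hF : ContDiffOn ℝ 2 F Ω) : DifferentiableAt ℝ F p :=
  (hF.contDiffAt (hΩ.mem_nhds hp)).differentiableAt two_ne_zero

lemma diffAt_fderiv {E' : Type*} [NormedAddCommGroup E'] [NormedSpace ℝ E']
    {Ω : Set ℍ[ℝ]} (hΩ : IsOpen Ω) {p : ℍ[ℝ]} (hp : p ∈ Ω)
    {F : ℍ[ℝ] → E'} (hF : ContDiffOn ℝ 2 F Ω) : DifferentiableAt ℝ (fderiv ℝ F) p :=
  ((((hF.fderiv_of_isOpen hΩ (m := 1)) one_add_one_eq_two.le).differentiableOn one_ne_zero) p hp).differentiableAt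
    (hΩ.mem_nhds hp)

lemma diffAt_DD {Ω : Set ℍ[ℝ]} (hΩ : IsOpen Ω) {p : ℍ[ℝ]} (hp : p ∈ Ω)
    {F : ℍ[ℝ] → ℝ} (hF : ContDiffOn ℝ 2 F Ω) (b : ℍ[ℝ]) :
    DifferentiableAt ℝ (DD b F) p := by
  have : DD b F = fun q => (ContinuousLinearMap.apply ℝ ℝ b) (fderiv ℝ F q) := rfl
  rw [this]
  exact (ContinuousLinearMap.apply ℝ ℝ b).differentiableAt.comp p (diffAt_fderiv hΩ hp hF)

lemma DD_DD_eq {Ω : Set ℍ[ℝ]} (hΩ : IsOpen Ω) {p : ℍ[ℝ]} (hp : p ∈ Ω)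
    {F : ℍ[ℝ] → ℝ} (hF : ContDiffOn ℝ 2 F Ω) (a b : ℍ[ℝ]) :
    DD a (DD b F) p = fderiv ℝ (fderiv ℝ F) p a b := by
  have h1 : DD b F = fun q => (ContinuousLinearMap.apply ℝ ℝ b) (fderiv ℝ F q) := rfl
  show fderiv ℝ (DD b F) p a = _
  rw [h1, clm_fderiv_apply _ (diffAt_fderiv hΩ hp hF)]
  rfl

lemma DD_symm {Ω : Set ℍ[ℝ]} (hΩ : IsOpen Ω) {p : ℍ[ℝ]} (hp : p ∈ Ω)
    {F : ℍ[ℝ] → ℝ} (hF : ContDiffOn ℝ 2 F Ω) (a b : ℍ[ℝ]) :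
    DD a (DD b F) p = DD b (DD a F) p := by
  rw [DD_DD_eq hΩ hp hF, DD_DD_eq hΩ hp hF]
  exact (hF.contDiffAt (hΩ.mem_nhds hp)).isSymmSndFDerivAt (by simp) a b

lemma DD_add {p : ℍ[ℝ]} {F G' : ℍ[ℝ] → ℝ} (hF : DifferentiableAt ℝ F p)
    (hG : DifferentiableAt ℝ G' p) (d : ℍ[ℝ]) :
    DD d (fun q => F q + G' q) p = DD d F p + DD d G' p := by
  unfold DD; rw [fderiv_fun_add hF hG]; rfl

lemma DD_sub {p : ℍ[ℝ]} {F G' : ℍ[ℝ] → ℝ} (hF : DifferentiableAt ℝ F p)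
    (hG : DifferentiableAt ℝ G' p) (d : ℍ[ℝ]) :
    DD d (fun q => F q - G' q) p = DD d F p - DD d G' p := by
  unfold DD; rw [fderiv_fun_sub hF hG]; rfl

lemma DD_mul {p : ℍ[ℝ]} {F G' : ℍ[ℝ] → ℝ} (hF : DifferentiableAt ℝ F p)
    (hG : DifferentiableAt ℝ G' p) (d : ℍ[ℝ]) :
    DD d (fun q => F q * G' q) p = DD d F p * G' p + F p * DD d G' p := by
  unfold DD; rw [fderiv_fun_mul hF hG]; simp; ring

lemma comp2 {Ω : Set ℍ[ℝ]} (hΩ : IsOpen Ω) {p : ℍ[ℝ]} (hp : p ∈ Ω)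
    {f : ℍ[ℝ] → ℍ[ℝ]} (hf : ContDiffOn ℝ 2 f Ω) (π : ℍ[ℝ] →L[ℝ] ℝ) (a b : ℍ[ℝ]) :
    π (fderiv ℝ (fun q => fderiv ℝ f q b) p a)
      = DD a (DD b (fun q => π (f q))) p := by
  have hdf : DifferentiableAt ℝ (fun q => fderiv ℝ f q b) p :=
    (ContinuousLinearMap.apply ℝ ℍ[ℝ] b).differentiableAt.comp p (diffAt_fderiv hΩ hp hf)
  rw [← clm_fderiv_apply π hdf a]
  exact (fderiv_congr_on hΩ hp (fun q hq =>
    (clm_fderiv_apply π (diffAt_of_C2 hΩ hq hf) b).symm)) ▸ rfl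

/-! ### component functions -/

def NF : ℍ[ℝ] → ℝ := fun q => q.imI^2 + q.imJ^2 + q.imK^2
def phiF (f : ℍ[ℝ] → ℍ[ℝ]) : ℍ[ℝ] → ℝ :=
  fun q => ((f q).imI * q.imI + (f q).imJ * q.imJ + (f q).imK * q.imK) / NF q

lemma DD_const {p : ℍ[ℝ]} (c : ℝ) (d : ℍ[ℝ]) : DD d (fun _ => c) p = 0 := by
  simp [DD]

lemma comp2_re {Ω : Set ℍ[ℝ]} (hΩ : IsOpen Ω) {p : ℍ[ℝ]} (hp : p ∈ Ω)
    {f : ℍ[ℝ] → ℍ[ℝ]} (hf : ContDiffOn ℝ 2 f Ω) (a b : ℍ[ℝ]) :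
    (fderiv ℝ (fun q => fderiv ℝ f q b) p a).re = DD a (DD b (fun q'' => (f q'').re)) p :=
  comp2 hΩ hp hf reC a b
lemma comp2_imI {Ω : Set ℍ[ℝ]} (hΩ : IsOpen Ω) {p : ℍ[ℝ]} (hp : p ∈ Ω)
    {f : ℍ[ℝ] → ℍ[ℝ]} (hf : ContDiffOn ℝ 2 f Ω) (a b : ℍ[ℝ]) :
    (fderiv ℝ (fun q => fderiv ℝ f q b) p a).imI = DD a (DD b (fun q'' => (f q'').imI)) p :=
  comp2 hΩ hp hf imIC a b
lemma comp2_imJ {Ω : Set ℍ[ℝ]} (hΩ : IsOpen Ω) {p : ℍ[ℝ]} (hp : p ∈ Ω)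
    {f : ℍ[ℝ] → ℍ[ℝ]} (hf : ContDiffOn ℝ 2 f Ω) (a b : ℍ[ℝ]) :
    (fderiv ℝ (fun q => fderiv ℝ f q b) p a).imJ = DD a (DD b (fun q'' => (f q'').imJ)) p :=
  comp2 hΩ hp hf imJC a b
lemma comp2_imK {Ω : Set ℍ[ℝ]} (hΩ : IsOpen Ω) {p : ℍ[ℝ]} (hp : p ∈ Ω)
    {f : ℍ[ℝ] → ℍ[ℝ]} (hf : ContDiffOn ℝ 2 f Ω) (a b : ℍ[ℝ]) :
    (fderiv ℝ (fun q => fderiv ℝ f q b) p a).imK = DD a (DD b (fun q'' => (f q'').imK)) p :=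
  comp2 hΩ hp hf imKC a b

/-- generic expansion for the `e₁,e₂,e₃`-shaped functions -/
lemma expand_eGen {Ω : Set ℍ[ℝ]} (hΩ : IsOpen Ω) {q : ℍ[ℝ]} (hq : q ∈ Ω)
    {P U : ℍ[ℝ] → ℝ} (hP : ContDiffOn ℝ 2 P Ω) (hU : ContDiffOn ℝ 2 U Ω)
    (A B C : ℍ[ℝ] → ℝ) (hA : DifferentiableAt ℝ A q) (hB : DifferentiableAt ℝ B q)
    (hC : DifferentiableAt ℝ C q) (b1 b2 b3 b4 d : ℍ[ℝ]) :
    DD d (fun q' => A q' * DD b1 P q' + DD b2 U q' + B q' * DD b3 P q' - C q' * DD b4 P q') q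
      = (DD d A q * DD b1 P q + A q * DD d (DD b1 P) q) + DD d (DD b2 U) q
        + (DD d B q * DD b3 P q + B q * DD d (DD b3 P) q)
        - (DD d C q * DD b4 P q + C q * DD d (DD b4 P) q) := by
  have h1 : DifferentiableAt ℝ (fun q' => A q' * DD b1 P q') q :=
    hA.mul (diffAt_DD hΩ hq hP b1)
  have h2 : DifferentiableAt ℝ (DD b2 U) q := diffAt_DD hΩ hq hU b2
  have h3 : DifferentiableAt ℝ (fun q' => B q' * DD b3 P q') q :=
    hB.mul (diffAt_DD hΩ hq hP b3)
  have h4 : DifferentiableAt ℝ (fun q' => C q' * DD b4 P q') q :=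
    hC.mul (diffAt_DD hΩ hq hP b4)
  rw [DD_sub (F := fun q' => A q' * DD b1 P q' + DD b2 U q' + B q' * DD b3 P q') ((h1.add h2).add h3) h4,
    DD_add (F := fun q' => A q' * DD b1 P q' + DD b2 U q') (h1.add h2) h3, DD_add h1 h2,
    DD_mul hA (diffAt_DD hΩ hq hP b1), DD_mul hB (diffAt_DD hΩ hq hP b3),
    DD_mul hC (diffAt_DD hΩ hq hP b4)]

/-- generic expansion for the `e₀`-shaped function -/
lemma expand_e0Gen {Ω : Set ℍ[ℝ]} (hΩ : IsOpen Ω) {q : ℍ[ℝ]} (hq : q ∈ Ω)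
    {P U : ℍ[ℝ] → ℝ} (hP : ContDiffOn ℝ 2 P Ω) (hU : ContDiffOn ℝ 2 U Ω)
    (A B C : ℍ[ℝ] → ℝ) (hA : DifferentiableAt ℝ A q) (hB : DifferentiableAt ℝ B q)
    (hC : DifferentiableAt ℝ C q) (d : ℍ[ℝ]) :
    DD d (fun q' => DD 1 U q' - P q' - A q' * DD qi P q' - B q' * DD qj P q'
        - C q' * DD qk P q') q
      = DD d (DD 1 U) q - DD d P q - (DD d A q * DD qi P q + A q * DD d (DD qi P) q)
        - (DD d B q * DD qj P q + B q * DD d (DD qj P) q)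
        - (DD d C q * DD qk P q + C q * DD d (DD qk P) q) := by
  have h0 : DifferentiableAt ℝ (DD 1 U) q := diffAt_DD hΩ hq hU 1
  have hPq : DifferentiableAt ℝ P q := diffAt_of_C2 hΩ hq hP
  have h1 : DifferentiableAt ℝ (fun q' => A q' * DD qi P q') q :=
    hA.mul (diffAt_DD hΩ hq hP qi)
  have h2 : DifferentiableAt ℝ (fun q' => B q' * DD qj P q') q :=
    hB.mul (diffAt_DD hΩ hq hP qj)
  have h3 : DifferentiableAt ℝ (fun q' => C q' * DD qk P q') q :=
    hC.mul (diffAt_DD hΩ hq hP qk)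
  rw [DD_sub (F := fun q' => DD 1 U q' - P q' - A q' * DD qi P q' - B q' * DD qj P q')
      (((h0.sub hPq).sub h1).sub h2) h3,
    DD_sub (F := fun q' => DD 1 U q' - P q' - A q' * DD qi P q') ((h0.sub hPq).sub h1) h2,
    DD_sub (F := fun q' => DD 1 U q' - P q') (h0.sub hPq) h1, DD_sub h0 hPq,
    DD_mul hA (diffAt_DD hΩ hq hP qi), DD_mul hB (diffAt_DD hΩ hq hP qj),
    DD_mul hC (diffAt_DD hΩ hq hP qk)]

/-- expansion for the first-derivative-of-component shaped functions -/
lemma expand_pc {Ω : Set ℍ[ℝ]} (hΩ : IsOpen Ω) {q : ℍ[ℝ]} (hq : q ∈ Ω)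
    {P : ℍ[ℝ] → ℝ} (hP : ContDiffOn ℝ 2 P Ω) (A : ℍ[ℝ] → ℝ)
    (hA : DifferentiableAt ℝ A q) (b d : ℍ[ℝ]) (c : ℝ) :
    DD d (fun q' => DD b P q' * A q' + P q' * c) q
      = DD d (DD b P) q * A q + DD b P q * DD d A q + DD d P q * c := by
  have h1 : DifferentiableAt ℝ (fun q' => DD b P q' * A q') q :=
    (diffAt_DD hΩ hq hP b).mul hA
  have h2 : DifferentiableAt ℝ (fun q' => P q' * c) q :=
    (diffAt_of_C2 hΩ hq hP).mul (differentiableAt_const c)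
  rw [DD_add h1 h2, DD_mul (diffAt_DD hΩ hq hP b) hA,
    DD_mul (diffAt_of_C2 hΩ hq hP) (differentiableAt_const c), DD_const]
  ring

def HF (P : ℍ[ℝ] → ℝ) : ℍ[ℝ] → ℍ[ℝ] := fun q =>
  (-2*DD 1 P q) • (1:ℍ[ℝ]) + (2*DD qi P q) • qi + (2*DD qj P q) • qj + (2*DD qk P q) • qk

lemma fderiv_HF {Ω : Set ℍ[ℝ]} (hΩ : IsOpen Ω) {p : ℍ[ℝ]} (hp : p ∈ Ω)
    {P : ℍ[ℝ] → ℝ} (hP : ContDiffOn ℝ 2 P Ω) (d : ℍ[ℝ]) :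
    fderiv ℝ (HF P) p d = (-2*DD d (DD 1 P) p) • (1:ℍ[ℝ]) + (2*DD d (DD qi P) p) • qi
      + (2*DD d (DD qj P) p) • qj + (2*DD d (DD qk P) p) • qk := by
  have k1 := ((diffAt_DD hΩ hp hP 1).hasFDerivAt.const_mul (-2)).smul_const (1:ℍ[ℝ])
  have k2 := ((diffAt_DD hΩ hp hP qi).hasFDerivAt.const_mul (2:ℝ)).smul_const qi
  have k3 := ((diffAt_DD hΩ hp hP qj).hasFDerivAt.const_mul (2:ℝ)).smul_const qj
  have k4 := ((diffAt_DD hΩ hp hP qk).hasFDerivAt.const_mul (2:ℝ)).smul_const qk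
  have := (((k1.add k2).add k3).add k4).fderiv
  simp only [Pi.add_def] at this
  rw [show HF P = fun q => ((-2*DD 1 P q) • (1:ℍ[ℝ]) + (2*DD qi P q) • qi
      + (2*DD qj P q) • qj + (2*DD qk P q) • qk) from rfl, this]
  simp [DD]

/-- If `f` is `C²` on an open set `Ω` of quaternions with nonzero imaginary
part, has the form `f = u + ι v` with `u, v` real-valued, and satisfies `D_l f = -2v/r` on `Ω`,
then `Δf` is left- and right-regular on `Ω`. -/
theorem fueter_theorem_general (Ω : Set ℍ[ℝ]) (hΩ : IsOpen Ω)
    (hΩim : ∀ p ∈ Ω, Quaternion.im p ≠ 0)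
    (f : ℍ[ℝ] → ℍ[ℝ]) (hf : ContDiffOn ℝ 2 f Ω)
    (u v : ℍ[ℝ] → ℝ)
    (hform : ∀ p ∈ Ω, f p = (u p : ℍ[ℝ]) + iot p * (v p : ℍ[ℝ]))
    (hDl : ∀ p ∈ Ω, Dl f p = ((-2 * v p / rad p : ℝ) : ℍ[ℝ])) :
    ∀ p ∈ Ω, Dl (Lap f) p = 0 ∧ Dr (Lap f) p = 0 := by
  -- component functions
  -- positivity of N on Ω
  have hNpos : ∀ q ∈ Ω, 0 < NF q := by
    intro q hq
    have h0 : (0:ℝ) ≤ NF q := by simp only [NF]; positivity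
    rcases h0.lt_or_eq with h | h
    · exact h
    · exfalso
      apply hΩim q hq
      simp only [NF] at h
      have h1 : q.imI = 0 ∧ q.imJ = 0 ∧ q.imK = 0 := by
        refine ⟨?_, ?_, ?_⟩ <;>
          nlinarith [sq_nonneg q.imI, sq_nonneg q.imJ, sq_nonneg q.imK]
      ext <;> simp [h1.1, h1.2.1, h1.2.2]
  -- smoothness
  have hufC2 : ContDiffOn ℝ 2 (fun q'' => (f q'').re) Ω := reC.contDiff.comp_contDiffOn hf
  have hf1C2 : ContDiffOn ℝ 2 (fun q => (f q).imI) Ω := imIC.contDiff.comp_contDiffOn hf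
  have hf2C2 : ContDiffOn ℝ 2 (fun q => (f q).imJ) Ω := imJC.contDiff.comp_contDiffOn hf
  have hf3C2 : ContDiffOn ℝ 2 (fun q => (f q).imK) Ω := imKC.contDiff.comp_contDiffOn hf
  have hcI : ContDiff ℝ 2 (fun q : ℍ[ℝ] => q.imI) := imIC.contDiff
  have hcJ : ContDiff ℝ 2 (fun q : ℍ[ℝ] => q.imJ) := imJC.contDiff
  have hcK : ContDiff ℝ 2 (fun q : ℍ[ℝ] => q.imK) := imKC.contDiff
  have hNC2 : ContDiffOn ℝ 2 NF Ω := by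
    have h : ContDiff ℝ 2 NF := by
      unfold NF; exact ((hcI.pow 2).add (hcJ.pow 2)).add (hcK.pow 2)
    exact h.contDiffOn
  have hpC2 : ContDiffOn ℝ 2 (phiF f) Ω := by
    unfold phiF
    exact ContDiffOn.div
      (((hf1C2.mul hcI.contDiffOn).add (hf2C2.mul hcJ.contDiffOn)).add
        (hf3C2.mul hcK.contDiffOn)) hNC2 (fun q hq => (hNpos q hq).ne')
  -- pointwise representation
  have hrad2 : ∀ q ∈ Ω, rad q ^ 2 = NF q := fun q hq => Real.sq_sqrt (hNpos q hq).le
  have hradpos : ∀ q ∈ Ω, 0 < rad q := fun q hq => Real.sqrt_pos.2 (hNpos q hq)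
  have hcomp : ∀ q ∈ Ω, (f q).imI = phiF f q * q.imI ∧ (f q).imJ = phiF f q * q.imJ ∧
      (f q).imK = phiF f q * q.imK ∧ -2 * v q / rad q = -2 * phiF f q := by
    intro q hq
    have h := hform q hq
    have hI : (f q).imI = (rad q)⁻¹ * q.imI * v q := by
      rw [h]; simp [iot, Quaternion.imI_mul]; ring
    have hJ : (f q).imJ = (rad q)⁻¹ * q.imJ * v q := by
      rw [h]; simp [iot, Quaternion.imJ_mul]; ring
    have hK : (f q).imK = (rad q)⁻¹ * q.imK * v q := by
      rw [h]; simp [iot, Quaternion.imK_mul]; ring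
    have hr0 := (hradpos q hq).ne'
    have hN0 := (hNpos q hq).ne'
    have hrr : rad q * rad q = NF q := by
      have := hrad2 q hq; nlinarith [this]
    have hv : phiF f q = v q / rad q := by
      show ((f q).imI * q.imI + (f q).imJ * q.imJ + (f q).imK * q.imK) / NF q = v q / rad q
      rw [hI, hJ, hK]
      rw [div_eq_div_iff hN0 hr0]
      field_simp
      simp only [NF]
    refine ⟨?_, ?_, ?_, ?_⟩
    · rw [hI, hv]; field_simp
    · rw [hJ, hv]; field_simp
    · rw [hK, hv]; field_simp
    · rw [hv]; field_simp
  have upt : pt f = fun q' => fderiv ℝ f q' 1 := rfl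
  have upx : px f = fun q' => fderiv ℝ f q' qi := rfl
  have upy : py f = fun q' => fderiv ℝ f q' qj := rfl
  have upz : pz f = fun q' => fderiv ℝ f q' qk := rfl
  -- differentiability shorthands
  have hdf : ∀ q ∈ Ω, DifferentiableAt ℝ f q := fun q hq => diffAt_of_C2 hΩ hq hf
  have hdP : ∀ q ∈ Ω, DifferentiableAt ℝ (phiF f) q := fun q hq => diffAt_of_C2 hΩ hq hpC2
  -- first derivatives of the imaginary components
  have dI : ∀ q ∈ Ω, ∀ d : ℍ[ℝ],
      DD d (fun q' => (f q').imI) q = DD d (phiF f) q * q.imI + phiF f q * d.imI := by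
    intro q hq d
    rw [DD_congr hΩ hq (fun q' hq' => (hcomp q' hq').1) d,
      DD_mul (hdP q hq) (diffAt_coordI q), DD_coordI]
  have dJ : ∀ q ∈ Ω, ∀ d : ℍ[ℝ],
      DD d (fun q' => (f q').imJ) q = DD d (phiF f) q * q.imJ + phiF f q * d.imJ := by
    intro q hq d
    rw [DD_congr hΩ hq (fun q' hq' => (hcomp q' hq').2.1) d,
      DD_mul (hdP q hq) (diffAt_coordJ q), DD_coordJ]
  have dK : ∀ q ∈ Ω, ∀ d : ℍ[ℝ],
      DD d (fun q' => (f q').imK) q = DD d (phiF f) q * q.imK + phiF f q * d.imK := by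
    intro q hq d
    rw [DD_congr hΩ hq (fun q' hq' => (hcomp q' hq').2.2.1) d,
      DD_mul (hdP q hq) (diffAt_coordK q), DD_coordK]
  -- components of the Fueter equation
  have hDlc : ∀ q ∈ Ω,
      (DD 1 (fun q'' => (f q'').re) q - DD qi (fun q' => (f q').imI) q - DD qj (fun q' => (f q').imJ) q
        - DD qk (fun q' => (f q').imK) q = -2 * phiF f q) ∧
      (DD 1 (fun q' => (f q').imI) q + DD qi (fun q'' => (f q'').re) q + DD qj (fun q' => (f q').imK) q
        - DD qk (fun q' => (f q').imJ) q = 0) ∧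
      (DD 1 (fun q' => (f q').imJ) q - DD qi (fun q' => (f q').imK) q + DD qj (fun q'' => (f q'').re) q
        + DD qk (fun q' => (f q').imI) q = 0) ∧
      (DD 1 (fun q' => (f q').imK) q + DD qi (fun q' => (f q').imJ) q
        - DD qj (fun q' => (f q').imI) q + DD qk (fun q'' => (f q'').re) q = 0) := by
    intro q hq
    have h := hDl q hq
    have hd := hdf q hq
    rw [Quaternion.ext_iff] at h
    obtain ⟨h0, h1, h2, h3⟩ := h
    simp only [Dl, pt, px, py, pz, Quaternion.re_add, Quaternion.imI_add, Quaternion.imJ_add,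
      Quaternion.imK_add, Quaternion.re_mul, Quaternion.imI_mul, Quaternion.imJ_mul,
      Quaternion.imK_mul, qi_re, qi_imI, qi_imJ, qi_imK, qj_re, qj_imI, qj_imJ, qj_imK,
      qk_re, qk_imI, qk_imJ, qk_imK, Quaternion.re_coe, Quaternion.imI_coe,
      Quaternion.imJ_coe, Quaternion.imK_coe, fd_re hd, fd_imI hd, fd_imJ hd, fd_imK hd,
      zero_mul, one_mul, mul_zero, mul_one, zero_add, add_zero, zero_sub, sub_zero,
      neg_zero, neg_neg] at h0 h1 h2 h3
    have hvr := (hcomp q hq).2.2.2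
    refine ⟨by linarith, by linarith, by linarith, by linarith⟩
  -- the scalar equations `e₀ = e₁ = e₂ = e₃ = 0` on Ω
  have he0 : ∀ q ∈ Ω, DD 1 (fun q'' => (f q'').re) q - phiF f q - q.imI * DD qi (phiF f) q
      - q.imJ * DD qj (phiF f) q - q.imK * DD qk (phiF f) q = 0 := by
    intro q hq
    have h := (hDlc q hq).1
    rw [dI q hq qi, dJ q hq qj, dK q hq qk] at h
    simp only [qi_imI, qj_imJ, qk_imK, mul_one] at h
    linarith
  have he1 : ∀ q ∈ Ω, q.imI * DD 1 (phiF f) q + DD qi (fun q'' => (f q'').re) q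
      + q.imK * DD qj (phiF f) q - q.imJ * DD qk (phiF f) q = 0 := by
    intro q hq
    have h := (hDlc q hq).2.1
    rw [dI q hq 1, dK q hq qj, dJ q hq qk] at h
    simp only [Quaternion.imI_one, Quaternion.imJ_one, Quaternion.imK_one, qj_imK, qk_imJ,
      mul_zero, add_zero] at h
    linarith
  have he2 : ∀ q ∈ Ω, q.imJ * DD 1 (phiF f) q + DD qj (fun q'' => (f q'').re) q
      + q.imI * DD qk (phiF f) q - q.imK * DD qi (phiF f) q = 0 := by
    intro q hq
    have h := (hDlc q hq).2.2.1
    rw [dJ q hq 1, dK q hq qi, dI q hq qk] at h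
    simp only [Quaternion.imI_one, Quaternion.imJ_one, Quaternion.imK_one, qi_imK, qk_imI,
      mul_zero, add_zero] at h
    linarith
  have he3 : ∀ q ∈ Ω, q.imK * DD 1 (phiF f) q + DD qk (fun q'' => (f q'').re) q
      + q.imJ * DD qi (phiF f) q - q.imI * DD qj (phiF f) q = 0 := by
    intro q hq
    have h := (hDlc q hq).2.2.2
    rw [dK q hq 1, dJ q hq qi, dI q hq qj] at h
    simp only [Quaternion.imI_one, Quaternion.imJ_one, Quaternion.imK_one, qi_imJ, qj_imI,
      mul_zero, add_zero] at h
    linarith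
  -- derivatives of the scalar equations
  have E0 : ∀ q ∈ Ω, ∀ d : ℍ[ℝ],
      DD d (DD 1 (fun q'' => (f q'').re)) q - DD d (phiF f) q
        - (d.imI * DD qi (phiF f) q + q.imI * DD d (DD qi (phiF f)) q)
        - (d.imJ * DD qj (phiF f) q + q.imJ * DD d (DD qj (phiF f)) q)
        - (d.imK * DD qk (phiF f) q + q.imK * DD d (DD qk (phiF f)) q) = 0 := by
    intro q hq d
    have h := expand_e0Gen hΩ hq hpC2 hufC2 (fun q' => q'.imI) (fun q' => q'.imJ)
      (fun q' => q'.imK) (diffAt_coordI q) (diffAt_coordJ q) (diffAt_coordK q) d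
    rw [DD_coordI, DD_coordJ, DD_coordK] at h
    rw [← h, DD_congr hΩ hq (fun q' hq' => he0 q' hq') d]
    exact DD_const 0 d
  have E1 : ∀ q ∈ Ω, ∀ d : ℍ[ℝ],
      (d.imI * DD 1 (phiF f) q + q.imI * DD d (DD 1 (phiF f)) q) + DD d (DD qi (fun q'' => (f q'').re)) q
        + (d.imK * DD qj (phiF f) q + q.imK * DD d (DD qj (phiF f)) q)
        - (d.imJ * DD qk (phiF f) q + q.imJ * DD d (DD qk (phiF f)) q) = 0 := by
    intro q hq d
    have h := expand_eGen hΩ hq hpC2 hufC2 (fun q' => q'.imI) (fun q' => q'.imK)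
      (fun q' => q'.imJ) (diffAt_coordI q) (diffAt_coordK q) (diffAt_coordJ q) 1 qi qj qk d
    rw [DD_coordI, DD_coordJ, DD_coordK] at h
    rw [← h, DD_congr hΩ hq (fun q' hq' => he1 q' hq') d]
    exact DD_const 0 d
  have E2 : ∀ q ∈ Ω, ∀ d : ℍ[ℝ],
      (d.imJ * DD 1 (phiF f) q + q.imJ * DD d (DD 1 (phiF f)) q) + DD d (DD qj (fun q'' => (f q'').re)) q
        + (d.imI * DD qk (phiF f) q + q.imI * DD d (DD qk (phiF f)) q)
        - (d.imK * DD qi (phiF f) q + q.imK * DD d (DD qi (phiF f)) q) = 0 := by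
    intro q hq d
    have h := expand_eGen hΩ hq hpC2 hufC2 (fun q' => q'.imJ) (fun q' => q'.imI)
      (fun q' => q'.imK) (diffAt_coordJ q) (diffAt_coordI q) (diffAt_coordK q) 1 qj qk qi d
    rw [DD_coordI, DD_coordJ, DD_coordK] at h
    rw [← h, DD_congr hΩ hq (fun q' hq' => he2 q' hq') d]
    exact DD_const 0 d
  have E3 : ∀ q ∈ Ω, ∀ d : ℍ[ℝ],
      (d.imK * DD 1 (phiF f) q + q.imK * DD d (DD 1 (phiF f)) q) + DD d (DD qk (fun q'' => (f q'').re)) q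
        + (d.imJ * DD qi (phiF f) q + q.imJ * DD d (DD qi (phiF f)) q)
        - (d.imI * DD qj (phiF f) q + q.imI * DD d (DD qj (phiF f)) q) = 0 := by
    intro q hq d
    have h := expand_eGen hΩ hq hpC2 hufC2 (fun q' => q'.imK) (fun q' => q'.imJ)
      (fun q' => q'.imI) (diffAt_coordK q) (diffAt_coordJ q) (diffAt_coordI q) 1 qk qi qj d
    rw [DD_coordI, DD_coordJ, DD_coordK] at h
    rw [← h, DD_congr hΩ hq (fun q' hq' => he3 q' hq') d]
    exact DD_const 0 d
  -- harmonicity of φ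
  have key : ∀ q ∈ Ω, DD 1 (DD 1 (phiF f)) q + DD qi (DD qi (phiF f)) q
      + DD qj (DD qj (phiF f)) q + DD qk (DD qk (phiF f)) q = 0 := by
    intro q hq
    have e11 := E1 q hq 1
    have e21 := E2 q hq 1
    have e31 := E3 q hq 1
    have e0i := E0 q hq qi
    have e0j := E0 q hq qj
    have e0k := E0 q hq qk
    have e3j := E3 q hq qj
    have e2k := E2 q hq qk
    have e1k := E1 q hq qk
    have e3i := E3 q hq qi
    have e2i := E2 q hq qi
    have e1j := E1 q hq qj
    simp only [Quaternion.imI_one, Quaternion.imJ_one, Quaternion.imK_one, qi_imI, qi_imJ,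
      qi_imK, qj_imI, qj_imJ, qj_imK, qk_imI, qk_imJ, qk_imK, zero_mul, one_mul, mul_zero,
      mul_one, zero_add, add_zero, sub_zero, zero_sub] at e11 e21 e31 e0i e0j e0k e3j e2k e1k e3i e2i e1j
    have su_ti := DD_symm hΩ hq hufC2 1 qi
    have su_tj := DD_symm hΩ hq hufC2 1 qj
    have su_tk := DD_symm hΩ hq hufC2 1 qk
    have su_jk := DD_symm hΩ hq hufC2 qj qk
    have su_ki := DD_symm hΩ hq hufC2 qk qi
    have su_ij := DD_symm hΩ hq hufC2 qi qj
    have hN := (hNpos q hq).ne'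
    have main : NF q * (DD 1 (DD 1 (phiF f)) q + DD qi (DD qi (phiF f)) q
        + DD qj (DD qj (phiF f)) q + DD qk (DD qk (phiF f)) q) = 0 := by
      simp only [NF]
      linear_combination q.imI * e11 + q.imJ * e21 + q.imK * e31 - q.imI * e0i
        - q.imJ * e0j - q.imK * e0k - q.imI * e3j + q.imI * e2k - q.imJ * e1k
        + q.imJ * e3i - q.imK * e2i + q.imK * e1j - q.imI * su_ti - q.imJ * su_tj
        - q.imK * su_tk + q.imI * su_jk + q.imJ * su_ki + q.imK * su_ij
    rcases mul_eq_zero.1 main with h | h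
    · exact absurd h hN
    · exact h
  -- Laplacian of f equals HF (phiF f) on Ω
  have hLap : ∀ q ∈ Ω, Lap f q = HF (phiF f) q := by
    intro q hq
    have sp_ti := DD_symm hΩ hq hpC2 1 qi
    have sp_tj := DD_symm hΩ hq hpC2 1 qj
    have sp_tk := DD_symm hΩ hq hpC2 1 qk
    have sp_ij := DD_symm hΩ hq hpC2 qi qj
    have sp_jk := DD_symm hΩ hq hpC2 qj qk
    have sp_ki := DD_symm hΩ hq hpC2 qk qi
    have a01 := E0 q hq 1
    have a1i := E1 q hq qi
    have a2j := E2 q hq qj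
    have a3k := E3 q hq qk
    simp only [Quaternion.imI_one, Quaternion.imJ_one, Quaternion.imK_one, qi_imI, qi_imJ,
      qi_imK, qj_imI, qj_imJ, qj_imK, qk_imI, qk_imJ, qk_imK, zero_mul, one_mul, mul_zero,
      mul_one, zero_add, add_zero, sub_zero, zero_sub] at a01 a1i a2j a3k
    have hkey := key q hq
    -- diagonal second derivatives of imaginary parts
    have rI : ∀ d : ℍ[ℝ], DD d (DD d (fun q'' => (f q'').imI)) q
        = DD d (DD d (phiF f)) q * q.imI + DD d (phiF f) q * d.imI
          + DD d (phiF f) q * d.imI := by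
      intro d
      rw [DD_congr hΩ hq (fun q' hq' => dI q' hq' d) d,
        expand_pc hΩ hq hpC2 (fun q' => q'.imI) (diffAt_coordI q) d d d.imI, DD_coordI]
    have rJ : ∀ d : ℍ[ℝ], DD d (DD d (fun q'' => (f q'').imJ)) q
        = DD d (DD d (phiF f)) q * q.imJ + DD d (phiF f) q * d.imJ
          + DD d (phiF f) q * d.imJ := by
      intro d
      rw [DD_congr hΩ hq (fun q' hq' => dJ q' hq' d) d,
        expand_pc hΩ hq hpC2 (fun q' => q'.imJ) (diffAt_coordJ q) d d d.imJ, DD_coordJ]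
    have rK : ∀ d : ℍ[ℝ], DD d (DD d (fun q'' => (f q'').imK)) q
        = DD d (DD d (phiF f)) q * q.imK + DD d (phiF f) q * d.imK
          + DD d (phiF f) q * d.imK := by
      intro d
      rw [DD_congr hΩ hq (fun q' hq' => dK q' hq' d) d,
        expand_pc hΩ hq hpC2 (fun q' => q'.imK) (diffAt_coordK q) d d d.imK, DD_coordK]
    ext
    · show (Lap f q).re = (HF (phiF f) q).re
      have L : (Lap f q).re = DD 1 (DD 1 (fun q'' => (f q'').re)) q
          + DD qi (DD qi (fun q'' => (f q'').re)) q + DD qj (DD qj (fun q'' => (f q'').re)) q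
          + DD qk (DD qk (fun q'' => (f q'').re)) q := by
        simp only [Lap, pt, px, py, pz, upt, upx, upy, upz, Quaternion.re_add,
          comp2_re hΩ hq hf 1 1, comp2_re hΩ hq hf qi qi, comp2_re hΩ hq hf qj qj,
          comp2_re hΩ hq hf qk qk]
      have R : (HF (phiF f) q).re = -2 * DD 1 (phiF f) q := by
        simp [HF]
      rw [L, R]
      linear_combination a01 + a1i + a2j + a3k + q.imI * sp_ti + q.imJ * sp_tj
        + q.imK * sp_tk - q.imK * sp_ij - q.imI * sp_jk - q.imJ * sp_ki
    · show (Lap f q).imI = (HF (phiF f) q).imI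
      have L : (Lap f q).imI = DD 1 (DD 1 (fun q'' => (f q'').imI)) q
          + DD qi (DD qi (fun q'' => (f q'').imI)) q
          + DD qj (DD qj (fun q'' => (f q'').imI)) q
          + DD qk (DD qk (fun q'' => (f q'').imI)) q := by
        simp only [Lap, pt, px, py, pz, upt, upx, upy, upz, Quaternion.imI_add,
          comp2_imI hΩ hq hf 1 1, comp2_imI hΩ hq hf qi qi, comp2_imI hΩ hq hf qj qj,
          comp2_imI hΩ hq hf qk qk]
      have R : (HF (phiF f) q).imI = 2 * DD qi (phiF f) q := by
        simp [HF]
      rw [L, R, rI 1, rI qi, rI qj, rI qk]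
      simp only [Quaternion.imI_one, qi_imI, qj_imI, qk_imI, mul_zero, mul_one, add_zero]
      linear_combination q.imI * hkey
    · show (Lap f q).imJ = (HF (phiF f) q).imJ
      have L : (Lap f q).imJ = DD 1 (DD 1 (fun q'' => (f q'').imJ)) q
          + DD qi (DD qi (fun q'' => (f q'').imJ)) q
          + DD qj (DD qj (fun q'' => (f q'').imJ)) q
          + DD qk (DD qk (fun q'' => (f q'').imJ)) q := by
        simp only [Lap, pt, px, py, pz, upt, upx, upy, upz, Quaternion.imJ_add,
          comp2_imJ hΩ hq hf 1 1, comp2_imJ hΩ hq hf qi qi, comp2_imJ hΩ hq hf qj qj,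
          comp2_imJ hΩ hq hf qk qk]
      have R : (HF (phiF f) q).imJ = 2 * DD qj (phiF f) q := by
        simp [HF]
      rw [L, R, rJ 1, rJ qi, rJ qj, rJ qk]
      simp only [Quaternion.imJ_one, qi_imJ, qj_imJ, qk_imJ, mul_zero, mul_one, add_zero]
      linear_combination q.imJ * hkey
    · show (Lap f q).imK = (HF (phiF f) q).imK
      have L : (Lap f q).imK = DD 1 (DD 1 (fun q'' => (f q'').imK)) q
          + DD qi (DD qi (fun q'' => (f q'').imK)) q
          + DD qj (DD qj (fun q'' => (f q'').imK)) q
          + DD qk (DD qk (fun q'' => (f q'').imK)) q := by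
        simp only [Lap, pt, px, py, pz, upt, upx, upy, upz, Quaternion.imK_add,
          comp2_imK hΩ hq hf 1 1, comp2_imK hΩ hq hf qi qi, comp2_imK hΩ hq hf qj qj,
          comp2_imK hΩ hq hf qk qk]
      have R : (HF (phiF f) q).imK = 2 * DD qk (phiF f) q := by
        simp [HF]
      rw [L, R, rK 1, rK qi, rK qj, rK qk]
      simp only [Quaternion.imK_one, qi_imK, qj_imK, qk_imK, mul_zero, mul_one, add_zero]
      linear_combination q.imK * hkey
  -- conclusion
  intro p hp
  have hfd : fderiv ℝ (Lap f) p = fderiv ℝ (HF (phiF f)) p := fderiv_congr_on hΩ hp hLap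
  have hH1 := fderiv_HF hΩ hp hpC2 1
  have hHi := fderiv_HF hΩ hp hpC2 qi
  have hHj := fderiv_HF hΩ hp hpC2 qj
  have hHk := fderiv_HF hΩ hp hpC2 qk
  have sp_ti := DD_symm hΩ hp hpC2 1 qi
  have sp_tj := DD_symm hΩ hp hpC2 1 qj
  have sp_tk := DD_symm hΩ hp hpC2 1 qk
  have sp_ij := DD_symm hΩ hp hpC2 qi qj
  have sp_jk := DD_symm hΩ hp hpC2 qj qk
  have sp_ki := DD_symm hΩ hp hpC2 qk qi
  have hkey := key p hp
  constructor
  · show pt (Lap f) p + qi * px (Lap f) p + qj * py (Lap f) p + qk * pz (Lap f) p = 0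
    simp only [pt, px, py, pz, hfd, hH1, hHi, hHj, hHk]
    ext <;>
      simp only [Quaternion.re_add, Quaternion.imI_add, Quaternion.imJ_add, Quaternion.imK_add,
        Quaternion.re_mul, Quaternion.imI_mul, Quaternion.imJ_mul, Quaternion.imK_mul,
        Quaternion.re_smul, Quaternion.imI_smul, Quaternion.imJ_smul, Quaternion.imK_smul,
        Quaternion.re_one, Quaternion.imI_one, Quaternion.imJ_one, Quaternion.imK_one,
        qi_re, qi_imI, qi_imJ, qi_imK, qj_re, qj_imI, qj_imJ, qj_imK, qk_re, qk_imI, qk_imJ,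
        qk_imK, Quaternion.re_zero, Quaternion.imI_zero, Quaternion.imJ_zero,
        Quaternion.imK_zero, smul_eq_mul, mul_zero, mul_one, zero_mul, one_mul, add_zero,
        zero_add, sub_zero, zero_sub, neg_zero, neg_neg] <;>
      linarith [hkey, sp_ti, sp_tj, sp_tk, sp_ij, sp_jk, sp_ki]
  · show pt (Lap f) p + px (Lap f) p * qi + py (Lap f) p * qj + pz (Lap f) p * qk = 0
    simp only [pt, px, py, pz, hfd, hH1, hHi, hHj, hHk]
    ext <;>
      simp only [Quaternion.re_add, Quaternion.imI_add, Quaternion.imJ_add, Quaternion.imK_add,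
        Quaternion.re_mul, Quaternion.imI_mul, Quaternion.imJ_mul, Quaternion.imK_mul,
        Quaternion.re_smul, Quaternion.imI_smul, Quaternion.imJ_smul, Quaternion.imK_smul,
        Quaternion.re_one, Quaternion.imI_one, Quaternion.imJ_one, Quaternion.imK_one,
        qi_re, qi_imI, qi_imJ, qi_imK, qj_re, qj_imI, qj_imJ, qj_imK, qk_re, qk_imI, qk_imJ,
        qk_imK, Quaternion.re_zero, Quaternion.imI_zero, Quaternion.imJ_zero,
        Quaternion.imK_zero, smul_eq_mul, mul_zero, mul_one, zero_mul, one_mul, add_zero,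
        zero_add, sub_zero, zero_sub, neg_zero, neg_neg] <;>
      linarith [hkey, sp_ti, sp_tj, sp_tk, sp_ij, sp_jk, sp_ki]
end
end

section
/- (Fueter's theorem.) Let F = u + i·v be holomorphic on the upper half complex plane, and let f : ℍ → ℍ be the function obtained by Fueter's construction, f(p) = u(t,r) + ι(p)·v(t,r). Then on the set of quaternions with nonzero imaginary part, D_l(Δf) = 0 and D_r(Δf) = 0. -/
open Quaternion

noncomputable section

namespace FueterAux

open ContinuousLinearMap

instance : FiniteDimensional ℝ ℍ[ℝ] :=
  Module.Finite.equiv (QuaternionAlgebra.linearEquivTuple (-1:ℝ) (0:ℝ) (-1:ℝ)).symm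

def lre : ℍ[ℝ] →L[ℝ] ℝ := LinearMap.toContinuousLinearMap (QuaternionAlgebra.reₗ (-1:ℝ) (0:ℝ) (-1:ℝ))
def lI : ℍ[ℝ] →L[ℝ] ℝ := LinearMap.toContinuousLinearMap (QuaternionAlgebra.imIₗ (-1:ℝ) (0:ℝ) (-1:ℝ))
def lJ : ℍ[ℝ] →L[ℝ] ℝ := LinearMap.toContinuousLinearMap (QuaternionAlgebra.imJₗ (-1:ℝ) (0:ℝ) (-1:ℝ))
def lK : ℍ[ℝ] →L[ℝ] ℝ := LinearMap.toContinuousLinearMap (QuaternionAlgebra.imKₗ (-1:ℝ) (0:ℝ) (-1:ℝ))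
def lim : ℍ[ℝ] →L[ℝ] ℍ[ℝ] := LinearMap.toContinuousLinearMap
  { toFun := Quaternion.im
    map_add' := fun a b => Quaternion.im_add a b
    map_smul' := fun s a => Quaternion.im_smul a s }

@[simp] lemma lre_apply (q : ℍ[ℝ]) : lre q = q.re := rfl
@[simp] lemma lI_apply (q : ℍ[ℝ]) : lI q = q.imI := rfl
@[simp] lemma lJ_apply (q : ℍ[ℝ]) : lJ q = q.imJ := rfl
@[simp] lemma lK_apply (q : ℍ[ℝ]) : lK q = q.imK := rfl
@[simp] lemma lim_apply (q : ℍ[ℝ]) : lim q = q.im := rfl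

@[simp] lemma qi_re : qi.re = 0 := rfl
@[simp] lemma qi_imI : qi.imI = 1 := rfl
@[simp] lemma qi_imJ : qi.imJ = 0 := rfl
@[simp] lemma qi_imK : qi.imK = 0 := rfl
@[simp] lemma qj_re : qj.re = 0 := rfl
@[simp] lemma qj_imI : qj.imI = 0 := rfl
@[simp] lemma qj_imJ : qj.imJ = 1 := rfl
@[simp] lemma qj_imK : qj.imK = 0 := rfl
@[simp] lemma qk_re : qk.re = 0 := rfl
@[simp] lemma qk_imI : qk.imI = 0 := rfl
@[simp] lemma qk_imJ : qk.imJ = 0 := rfl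
@[simp] lemma qk_imK : qk.imK = 1 := rfl

def S (q : ℍ[ℝ]) : ℝ := q.imI^2 + q.imJ^2 + q.imK^2
def O : Set ℍ[ℝ] := {q | 0 < S q}

lemma contS : Continuous S :=
  ((lI.continuous.pow 2).add (lJ.continuous.pow 2)).add (lK.continuous.pow 2)

lemma isOpen_O : IsOpen O := isOpen_lt continuous_const contS

lemma rad_eq (q : ℍ[ℝ]) : rad q = Real.sqrt (S q) := rfl
lemma rad_pos {q : ℍ[ℝ]} (hq : q ∈ O) : 0 < rad q := Real.sqrt_pos.mpr hq
lemma rad_ne {q : ℍ[ℝ]} (hq : q ∈ O) : rad q ≠ 0 := (rad_pos hq).ne'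
lemma sq_rad {q : ℍ[ℝ]} (hq : q ∈ O) : q.imI^2 + q.imJ^2 + q.imK^2 = rad q ^ 2 := by
  have : (0:ℝ) ≤ S q := le_of_lt hq
  rw [rad_eq, Real.sq_sqrt this]; rfl

lemma mem_O_iff {q : ℍ[ℝ]} : q ∈ O ↔ Quaternion.im q ≠ 0 := by
  constructor
  · intro hq h0
    have h1 : q.imI = 0 := by
      have := congrArg QuaternionAlgebra.imI h0; simpa using this
    have h2 : q.imJ = 0 := by
      have := congrArg QuaternionAlgebra.imJ h0; simpa using this
    have h3 : q.imK = 0 := by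
      have := congrArg QuaternionAlgebra.imK h0; simpa using this
    have : S q = 0 := by simp [S, h1, h2, h3]
    exact absurd this (ne_of_gt hq)
  · intro h
    have hS0 : (0:ℝ) ≤ S q := by unfold S; positivity
    rcases eq_or_lt_of_le hS0 with h0 | h0
    · exfalso
      apply h
      have hS : q.imI^2 + q.imJ^2 + q.imK^2 = 0 := h0.symm
      have h1 : q.imI = 0 ∧ q.imJ = 0 ∧ q.imK = 0 := by
        refine ⟨?_, ?_, ?_⟩ <;>
          nlinarith [sq_nonneg q.imI, sq_nonneg q.imJ, sq_nonneg q.imK, hS]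
      ext <;> simp [h1.1, h1.2.1, h1.2.2]
    · exact h0

def rd (q : ℍ[ℝ]) : ℍ[ℝ] →L[ℝ] ℝ := q.imI • lI + q.imJ • lJ + q.imK • lK

lemma hasFDerivAt_S (q : ℍ[ℝ]) : HasFDerivAt S ((2:ℝ) • rd q) q := by
  have hfun : S = fun q : ℍ[ℝ] => q.imI*q.imI + q.imJ*q.imJ + q.imK*q.imK := by
    funext q; simp [S]; ring
  rw [hfun]
  have h := (((lI.hasFDerivAt (x := q)).mul (lI.hasFDerivAt (x := q))).add
    ((lJ.hasFDerivAt (x := q)).mul (lJ.hasFDerivAt (x := q)))).add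
    ((lK.hasFDerivAt (x := q)).mul (lK.hasFDerivAt (x := q)))
  refine h.congr_fderiv (Eq.symm ?_)
  ext e
  simp [rd]
  ring

lemma hasFDerivAt_rad {q : ℍ[ℝ]} (hq : q ∈ O) :
    HasFDerivAt rad ((rad q)⁻¹ • rd q) q := by
  have h := (Real.hasDerivAt_sqrt (ne_of_gt hq)).comp_hasFDerivAt q (hasFDerivAt_S q)
  refine h.congr_fderiv (Eq.symm ?_)
  rw [smul_smul]
  congr 1
  rw [← rad_eq]
  field_simp

lemma hasFDerivAt_rinv {q : ℍ[ℝ]} (hq : q ∈ O) :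
    HasFDerivAt (fun q => (rad q)⁻¹) ((-((rad q)^2)⁻¹) • ((rad q)⁻¹ • rd q)) q :=
  (hasDerivAt_inv (rad_ne hq)).comp_hasFDerivAt q (hasFDerivAt_rad hq)

def φ (q : ℍ[ℝ]) : ℂ := ⟨q.re, rad q⟩

def Dφ (q : ℍ[ℝ]) : ℍ[ℝ] →L[ℝ] ℂ :=
  Complex.ofRealCLM.comp lre + ((rad q)⁻¹ • rd q).smulRight Complex.I

lemma hasFDerivAt_φ {q : ℍ[ℝ]} (hq : q ∈ O) : HasFDerivAt φ (Dφ q) q := by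
  have h1 : HasFDerivAt (fun q : ℍ[ℝ] => ((q.re : ℝ) : ℂ)) (Complex.ofRealCLM.comp lre) q :=
    (Complex.ofRealCLM.comp lre).hasFDerivAt
  have h2 : HasFDerivAt (fun q : ℍ[ℝ] => rad q • Complex.I)
      (((rad q)⁻¹ • rd q).smulRight Complex.I) q := (hasFDerivAt_rad hq).smul_const Complex.I
  have h := h1.add h2
  refine h.congr_of_eventuallyEq (Filter.Eventually.of_forall ?_)
  intro q
  simp [φ, Complex.ext_iff]

def Ω : Set ℂ := {z : ℂ | 0 < z.im}
lemma isOpen_Ω : IsOpen Ω := isOpen_lt continuous_const Complex.continuous_im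

lemma φ_mem_Ω {q : ℍ[ℝ]} (hq : q ∈ O) : φ q ∈ Ω := by
  simpa [Ω, φ] using rad_pos hq

def Fd (F : ℂ → ℂ) : ℕ → ℂ → ℂ
  | 0 => F
  | (k+1) => deriv (Fd F k)

lemma analytic_Fd {F : ℂ → ℂ} (hF : DifferentiableOn ℂ F Ω) :
    ∀ k, AnalyticOnNhd ℂ (Fd F k) Ω := by
  intro k
  induction k with
  | zero => exact hF.analyticOnNhd isOpen_Ω
  | succ k ih => exact ih.deriv

lemma hasDerivAt_Fd {F : ℂ → ℂ} (hF : DifferentiableOn ℂ F Ω) (k : ℕ) {z : ℂ}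
    (hz : z ∈ Ω) : HasDerivAt (Fd F k) (Fd F (k+1) z) z :=
  (analytic_Fd hF k z hz).differentiableAt.hasDerivAt

/-- scalar atoms -/
def A (F : ℂ → ℂ) (k : ℕ) (q : ℍ[ℝ]) : ℝ := (Fd F k (φ q)).re
def B (F : ℂ → ℂ) (k : ℕ) (q : ℍ[ℝ]) : ℝ := (Fd F k (φ q)).im

def DC (F : ℂ → ℂ) (k : ℕ) (q : ℍ[ℝ]) : ℍ[ℝ] →L[ℝ] ℂ :=
  (((1 : ℂ →L[ℂ] ℂ).smulRight (Fd F (k+1) (φ q))).restrictScalars ℝ).comp (Dφ q)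
def DA (F : ℂ → ℂ) (k : ℕ) (q : ℍ[ℝ]) : ℍ[ℝ] →L[ℝ] ℝ := Complex.reCLM.comp (DC F k q)
def DB (F : ℂ → ℂ) (k : ℕ) (q : ℍ[ℝ]) : ℍ[ℝ] →L[ℝ] ℝ := Complex.imCLM.comp (DC F k q)

lemma hasFDerivAt_C {F : ℂ → ℂ} (hF : DifferentiableOn ℂ F Ω) (k : ℕ) {q : ℍ[ℝ]}
    (hq : q ∈ O) : HasFDerivAt (fun q => Fd F k (φ q)) (DC F k q) q :=
  (((hasDerivAt_Fd hF k (φ_mem_Ω hq)).hasFDerivAt).restrictScalars ℝ).comp q (hasFDerivAt_φ hq)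

lemma hasFDerivAt_A {F : ℂ → ℂ} (hF : DifferentiableOn ℂ F Ω) (k : ℕ) {q : ℍ[ℝ]}
    (hq : q ∈ O) : HasFDerivAt (A F k) (DA F k q) q :=
  Complex.reCLM.hasFDerivAt.comp q (hasFDerivAt_C hF k hq)

lemma hasFDerivAt_B {F : ℂ → ℂ} (hF : DifferentiableOn ℂ F Ω) (k : ℕ) {q : ℍ[ℝ]}
    (hq : q ∈ O) : HasFDerivAt (B F k) (DB F k q) q :=
  Complex.imCLM.hasFDerivAt.comp q (hasFDerivAt_C hF k hq)

@[simp] lemma DA_apply (F : ℂ → ℂ) (k : ℕ) (q e : ℍ[ℝ]) :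
    DA F k q e = e.re * A F (k+1) q
      - ((rad q)⁻¹ * (q.imI*e.imI + q.imJ*e.imJ + q.imK*e.imK)) * B F (k+1) q := by
  have : DA F k q e = (Dφ q e * Fd F (k+1) (φ q)).re := by
    simp [DA, DC]
  rw [this]
  simp [Dφ, rd, A, B, Complex.add_re, Complex.mul_re, smul_smul]
  exact Or.inl (by ring)

@[simp] lemma DB_apply (F : ℂ → ℂ) (k : ℕ) (q e : ℍ[ℝ]) :
    DB F k q e = e.re * B F (k+1) q
      + ((rad q)⁻¹ * (q.imI*e.imI + q.imJ*e.imJ + q.imK*e.imK)) * A F (k+1) q := by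
  have : DB F k q e = (Dφ q e * Fd F (k+1) (φ q)).im := by
    simp [DB, DC]
  rw [this]
  simp [Dφ, rd, A, B, Complex.add_im, Complex.mul_im, smul_smul]
  exact Or.inl (by ring)

@[simp] lemma im_one : (1 : ℍ[ℝ]).im = 0 := by ext <;> simp

/-- The Fueter-form model functions. -/
def E (F : ℂ → ℂ) (k : ℕ) (q : ℍ[ℝ]) : ℍ[ℝ] :=
  A F k q • (1:ℍ[ℝ]) + ((rad q)⁻¹ * B F k q) • q.im

def Xi (F : ℂ → ℂ) (k : ℕ) (q : ℍ[ℝ]) : ℍ[ℝ] :=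
  (-((rad q)⁻¹ * q.imI * B F (k+1) q)) • (1:ℍ[ℝ]) +
    ((rad q)⁻¹ * (rad q)⁻¹ * q.imI * A F (k+1) q
      - (rad q)⁻¹ * (rad q)⁻¹ * (rad q)⁻¹ * q.imI * B F k q) • q.im +
    ((rad q)⁻¹ * B F k q) • qi

def Xj (F : ℂ → ℂ) (k : ℕ) (q : ℍ[ℝ]) : ℍ[ℝ] :=
  (-((rad q)⁻¹ * q.imJ * B F (k+1) q)) • (1:ℍ[ℝ]) +
    ((rad q)⁻¹ * (rad q)⁻¹ * q.imJ * A F (k+1) q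
      - (rad q)⁻¹ * (rad q)⁻¹ * (rad q)⁻¹ * q.imJ * B F k q) • q.im +
    ((rad q)⁻¹ * B F k q) • qj

def Xk (F : ℂ → ℂ) (k : ℕ) (q : ℍ[ℝ]) : ℍ[ℝ] :=
  (-((rad q)⁻¹ * q.imK * B F (k+1) q)) • (1:ℍ[ℝ]) +
    ((rad q)⁻¹ * (rad q)⁻¹ * q.imK * A F (k+1) q
      - (rad q)⁻¹ * (rad q)⁻¹ * (rad q)⁻¹ * q.imK * B F k q) • q.im +
    ((rad q)⁻¹ * B F k q) • qk

def G (F : ℂ → ℂ) (q : ℍ[ℝ]) : ℍ[ℝ] :=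
  (-(2 * (rad q)⁻¹ * B F 1 q)) • (1:ℍ[ℝ]) +
    (2 * (rad q)⁻¹ * (rad q)⁻¹ * A F 1 q
      - 2 * (rad q)⁻¹ * (rad q)⁻¹ * (rad q)⁻¹ * B F 0 q) • q.im

lemma f_eq_E {F : ℂ → ℂ} {f : ℍ[ℝ] → ℍ[ℝ]}
    (hf : ∀ p : ℍ[ℝ], Quaternion.im p ≠ 0 →
      f p = ((F ⟨p.re, rad p⟩).re : ℍ[ℝ]) + iot p * ((F ⟨p.re, rad p⟩).im : ℍ[ℝ])) :
    ∀ q ∈ O, f q = E F 0 q := by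
  intro q hq
  rw [hf q (mem_O_iff.mp hq)]
  rw [Quaternion.mul_coe_eq_smul]
  unfold iot E A B Fd φ
  rw [smul_smul]
  congr 1
  · ext <;> simp
  · ring_nf

lemma hasFDerivAt_E {F : ℂ → ℂ} (hF : DifferentiableOn ℂ F Ω) (k : ℕ) {q : ℍ[ℝ]} (hq : q ∈ O) :
    HasFDerivAt (E F k)
      ((DA F k q).smulRight (1:ℍ[ℝ]) +
        (((rad q)⁻¹ * B F k q) • lim +
          ((rad q)⁻¹ • DB F k q +
            B F k q • ((-((rad q)^2)⁻¹) • ((rad q)⁻¹ • rd q))).smulRight q.im)) q := by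
  have h1 := (hasFDerivAt_A hF k hq).smul_const (1:ℍ[ℝ])
  have h2 := ((hasFDerivAt_rinv hq).mul (hasFDerivAt_B hF k hq)).smul (lim.hasFDerivAt (x := q))
  exact h1.add h2

lemma fderiv_E_one {F : ℂ → ℂ} (hF : DifferentiableOn ℂ F Ω) (k : ℕ) {q : ℍ[ℝ]} (hq : q ∈ O) :
    fderiv ℝ (E F k) q 1 = E F (k+1) q := by
  rw [(hasFDerivAt_E hF k hq).fderiv]
  ext <;> simp [E, rd] <;> ring

lemma fderiv_E_qi {F : ℂ → ℂ} (hF : DifferentiableOn ℂ F Ω) (k : ℕ) {q : ℍ[ℝ]} (hq : q ∈ O) :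
    fderiv ℝ (E F k) q qi = Xi F k q := by
  rw [(hasFDerivAt_E hF k hq).fderiv]
  have hr := rad_ne hq
  ext <;> (simp [Xi, rd]; (try exact Or.inl (by field_simp; ring)); (try field_simp) ; (try ring))

lemma fderiv_E_qj {F : ℂ → ℂ} (hF : DifferentiableOn ℂ F Ω) (k : ℕ) {q : ℍ[ℝ]} (hq : q ∈ O) :
    fderiv ℝ (E F k) q qj = Xj F k q := by
  rw [(hasFDerivAt_E hF k hq).fderiv]
  have hr := rad_ne hq
  ext <;> (simp [Xj, rd]; (try exact Or.inl (by field_simp; ring)); (try field_simp) ; (try ring))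

lemma fderiv_E_qk {F : ℂ → ℂ} (hF : DifferentiableOn ℂ F Ω) (k : ℕ) {q : ℍ[ℝ]} (hq : q ∈ O) :
    fderiv ℝ (E F k) q qk = Xk F k q := by
  rw [(hasFDerivAt_E hF k hq).fderiv]
  have hr := rad_ne hq
  ext <;> (simp [Xk, rd]; (try exact Or.inl (by field_simp; ring)); (try field_simp) ; (try ring))

lemma eqOn_nhds {g h : ℍ[ℝ] → ℍ[ℝ]} {q : ℍ[ℝ]} (hq : q ∈ O)
    (he : ∀ x ∈ O, g x = h x) : g =ᶠ[nhds q] h :=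
  Filter.eventuallyEq_of_mem (isOpen_O.mem_nhds hq) he

lemma pt_f_eq {F : ℂ → ℂ} {f : ℍ[ℝ] → ℍ[ℝ]} (hF : DifferentiableOn ℂ F Ω)
    (hfO : ∀ q ∈ O, f q = E F 0 q) : ∀ q ∈ O, pt f q = E F 1 q := by
  intro q hq
  unfold pt
  rw [(eqOn_nhds hq hfO).fderiv_eq]
  exact fderiv_E_one hF 0 hq

lemma px_f_eq {F : ℂ → ℂ} {f : ℍ[ℝ] → ℍ[ℝ]} (hF : DifferentiableOn ℂ F Ω)
    (hfO : ∀ q ∈ O, f q = E F 0 q) : ∀ q ∈ O, px f q = Xi F 0 q := by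
  intro q hq
  unfold px
  rw [(eqOn_nhds hq hfO).fderiv_eq]
  exact fderiv_E_qi hF 0 hq

lemma py_f_eq {F : ℂ → ℂ} {f : ℍ[ℝ] → ℍ[ℝ]} (hF : DifferentiableOn ℂ F Ω)
    (hfO : ∀ q ∈ O, f q = E F 0 q) : ∀ q ∈ O, py f q = Xj F 0 q := by
  intro q hq
  unfold py
  rw [(eqOn_nhds hq hfO).fderiv_eq]
  exact fderiv_E_qj hF 0 hq

lemma pz_f_eq {F : ℂ → ℂ} {f : ℍ[ℝ] → ℍ[ℝ]} (hF : DifferentiableOn ℂ F Ω)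
    (hfO : ∀ q ∈ O, f q = E F 0 q) : ∀ q ∈ O, pz f q = Xk F 0 q := by
  intro q hq
  unfold pz
  rw [(eqOn_nhds hq hfO).fderiv_eq]
  exact fderiv_E_qk hF 0 hq

set_option maxHeartbeats 2000000 in
lemma Lap_f_eq {F : ℂ → ℂ} {f : ℍ[ℝ] → ℍ[ℝ]} (hF : DifferentiableOn ℂ F Ω)
    (hfO : ∀ q ∈ O, f q = E F 0 q) : ∀ q ∈ O, Lap f q = G F q := by
  intro q hq
  have hρ := hasFDerivAt_rinv hq
  have hxI : HasFDerivAt (fun q : ℍ[ℝ] => q.imI) lI q := lI.hasFDerivAt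
  have hxJ : HasFDerivAt (fun q : ℍ[ℝ] => q.imJ) lJ q := lJ.hasFDerivAt
  have hxK : HasFDerivAt (fun q : ℍ[ℝ] => q.imK) lK q := lK.hasFDerivAt
  have him : HasFDerivAt (fun q : ℍ[ℝ] => q.im) lim q := lim.hasFDerivAt
  have hA1 := hasFDerivAt_A hF 1 hq
  have hB0 := hasFDerivAt_B hF 0 hq
  have hB1 := hasFDerivAt_B hF 1 hq
  have hXi := ((((hρ.mul hxI).mul hB1).neg.smul_const (1:ℍ[ℝ])).add
      (((((hρ.mul hρ).mul hxI).mul hA1).sub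
        ((((hρ.mul hρ).mul hρ).mul hxI).mul hB0)).smul him)).add
      ((hρ.mul hB0).smul_const qi)
  have hXj := ((((hρ.mul hxJ).mul hB1).neg.smul_const (1:ℍ[ℝ])).add
      (((((hρ.mul hρ).mul hxJ).mul hA1).sub
        ((((hρ.mul hρ).mul hρ).mul hxJ).mul hB0)).smul him)).add
      ((hρ.mul hB0).smul_const qj)
  have hXk := ((((hρ.mul hxK).mul hB1).neg.smul_const (1:ℍ[ℝ])).add
      (((((hρ.mul hρ).mul hxK).mul hA1).sub
        ((((hρ.mul hρ).mul hρ).mul hxK).mul hB0)).smul him)).add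
      ((hρ.mul hB0).smul_const qk)
  have h1 : pt (pt f) q = E F 2 q := by
    show fderiv ℝ (pt f) q 1 = _
    rw [(eqOn_nhds hq (pt_f_eq hF hfO)).fderiv_eq]
    exact fderiv_E_one hF 1 hq
  have h2 : px (px f) q = fderiv ℝ (Xi F 0) q qi := by
    show fderiv ℝ (px f) q qi = _
    rw [(eqOn_nhds hq (px_f_eq hF hfO)).fderiv_eq]
  have h3 : py (py f) q = fderiv ℝ (Xj F 0) q qj := by
    show fderiv ℝ (py f) q qj = _
    rw [(eqOn_nhds hq (py_f_eq hF hfO)).fderiv_eq]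
  have h4 : pz (pz f) q = fderiv ℝ (Xk F 0) q qk := by
    show fderiv ℝ (pz f) q qk = _
    rw [(eqOn_nhds hq (pz_f_eq hF hfO)).fderiv_eq]
  unfold Lap
  rw [h1, h2, h3, h4,
    (show HasFDerivAt (Xi F 0) _ q from hXi).fderiv,
    (show HasFDerivAt (Xj F 0) _ q from hXj).fderiv,
    (show HasFDerivAt (Xk F 0) _ q from hXk).fderiv]
  have hr := rad_ne hq
  have hs := sq_rad hq
  simp only [ContinuousLinearMap.add_apply, ContinuousLinearMap.coe_smul', Pi.smul_apply,
    ContinuousLinearMap.smulRight_apply, ContinuousLinearMap.neg_apply,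
    ContinuousLinearMap.coe_sub', Pi.sub_apply, DA_apply, DB_apply, rd,
    lI_apply, lJ_apply, lK_apply, smul_eq_mul,
    qi_re, qi_imI, qi_imJ, qi_imK, qj_re, qj_imI, qj_imJ, qj_imK,
    qk_re, qk_imI, qk_imJ, qk_imK]
  have hpow : ((rad q)^2)⁻¹ = (rad q)⁻¹ * (rad q)⁻¹ := by rw [sq, mul_inv]
  have hu : (q.imI^2 + q.imJ^2 + q.imK^2) * ((rad q)⁻¹ * (rad q)⁻¹) = 1 := by
    rw [hs, ← mul_inv, ← sq, mul_inv_cancel₀ (pow_ne_zero 2 hr)]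
  simp only [hpow]
  ext
  · simp [E, G]
    linear_combination (B F 1 q * (rad q)⁻¹ - A F 2 q) * hu
  · simp [E, G]
    linear_combination (-(q.imI * ((rad q)⁻¹ * B F 2 q + 3*(rad q)⁻¹^2 * A F 1 q
      - 3*(rad q)⁻¹^3 * B F 0 q))) * hu
  · simp [E, G]
    linear_combination (-(q.imJ * ((rad q)⁻¹ * B F 2 q + 3*(rad q)⁻¹^2 * A F 1 q
      - 3*(rad q)⁻¹^3 * B F 0 q))) * hu
  · simp [E, G]
    linear_combination (-(q.imK * ((rad q)⁻¹ * B F 2 q + 3*(rad q)⁻¹^2 * A F 1 q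
      - 3*(rad q)⁻¹^3 * B F 0 q))) * hu

set_option maxHeartbeats 2000000 in
lemma DlDr_Lap {F : ℂ → ℂ} {f : ℍ[ℝ] → ℍ[ℝ]} (hF : DifferentiableOn ℂ F Ω)
    (hfO : ∀ q ∈ O, f q = E F 0 q) :
    ∀ q ∈ O, Dl (Lap f) q = 0 ∧ Dr (Lap f) q = 0 := by
  intro q hq
  have hρ := hasFDerivAt_rinv hq
  have him : HasFDerivAt (fun q : ℍ[ℝ] => q.im) lim q := lim.hasFDerivAt
  have hA1 := hasFDerivAt_A hF 1 hq
  have hB0 := hasFDerivAt_B hF 0 hq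
  have hB1 := hasFDerivAt_B hF 1 hq
  have hG := ((((hρ.const_mul (2:ℝ)).mul hB1).neg.smul_const (1:ℍ[ℝ])).add
      (((((hρ.const_mul (2:ℝ)).mul hρ).mul hA1).sub
        ((((hρ.const_mul (2:ℝ)).mul hρ).mul hρ).mul hB0)).smul him))
  have e : fderiv ℝ (Lap f) q = fderiv ℝ (G F) q :=
    (eqOn_nhds hq (Lap_f_eq hF hfO)).fderiv_eq
  have hGf := (show HasFDerivAt (G F) _ q from hG).fderiv
  have hr := rad_ne hq
  have hs := sq_rad hq
  have hpow : ((rad q)^2)⁻¹ = (rad q)⁻¹ * (rad q)⁻¹ := by rw [sq, mul_inv]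
  have hu : (q.imI^2 + q.imJ^2 + q.imK^2) * ((rad q)⁻¹ * (rad q)⁻¹) = 1 := by
    rw [hs, ← mul_inv, ← sq, mul_inv_cancel₀ (pow_ne_zero 2 hr)]
  constructor
  · show pt (Lap f) q + qi * px (Lap f) q + qj * py (Lap f) q + qk * pz (Lap f) q = 0
    show fderiv ℝ (Lap f) q 1 + qi * fderiv ℝ (Lap f) q qi
      + qj * fderiv ℝ (Lap f) q qj + qk * fderiv ℝ (Lap f) q qk = 0
    rw [e, hGf]
    simp only [hpow]
    ext
    · simp [rd]
      linear_combination (2*(rad q)⁻¹*B F 2 q + 6*(rad q)⁻¹^2*A F 1 q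
        - 6*(rad q)⁻¹^3*B F 0 q) * hu
    · simp [rd]
      ring
    · simp [rd]
      ring
    · simp [rd]
      ring
  · show pt (Lap f) q + px (Lap f) q * qi + py (Lap f) q * qj + pz (Lap f) q * qk = 0
    show fderiv ℝ (Lap f) q 1 + fderiv ℝ (Lap f) q qi * qi
      + fderiv ℝ (Lap f) q qj * qj + fderiv ℝ (Lap f) q qk * qk = 0
    rw [e, hGf]
    simp only [hpow]
    ext
    · simp [rd]
      linear_combination (2*(rad q)⁻¹*B F 2 q + 6*(rad q)⁻¹^2*A F 1 q
        - 6*(rad q)⁻¹^3*B F 0 q) * hu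
    · simp [rd]
      ring
    · simp [rd]
      ring
    · simp [rd]
      ring

end FueterAux

/-- **Fueter's theorem.** If `F = u + iv` is holomorphic on the upper half plane
and `f(p) = u(t,r) + ι(p) v(t,r)` is obtained by Fueter's construction, then `D_l (Δf) = 0` and
`D_r (Δf) = 0` on the set of quaternions with nonzero imaginary part. -/
theorem fueter_theorem
    (F : ℂ → ℂ) (hF : DifferentiableOn ℂ F {z : ℂ | 0 < z.im})
    (f : ℍ[ℝ] → ℍ[ℝ])
    (hf : ∀ p : ℍ[ℝ], Quaternion.im p ≠ 0 →
      f p = ((F ⟨p.re, rad p⟩).re : ℍ[ℝ]) + iot p * ((F ⟨p.re, rad p⟩).im : ℍ[ℝ])) :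
    ∀ p : ℍ[ℝ], Quaternion.im p ≠ 0 → Dl (Lap f) p = 0 ∧ Dr (Lap f) p = 0 := by
  intro p hp
  exact FueterAux.DlDr_Lap hF (FueterAux.f_eq_E hf) p (FueterAux.mem_O_iff.mpr hp)
end
end

section
/- Let F = u + i·v be holomorphic on the upper half complex plane, and let f : ℍ → ℍ be the function obtained by Fueter's construction, f(p) = u(t,r) + ι(p)·v(t,r). Then on the set of quaternions with nonzero imaginary part, D_l f = D_r f = −2·v(t,r)/r. -/
open Quaternion

noncomputable section

lemma sq_sum_pos {p : ℍ[ℝ]} (hp : Quaternion.im p ≠ 0) :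
    0 < p.imI^2 + p.imJ^2 + p.imK^2 := by
  rcases lt_or_eq_of_le (by positivity : (0:ℝ) ≤ p.imI^2 + p.imJ^2 + p.imK^2) with h | h
  · exact h
  · exfalso; apply hp
    have h1 : p.imI = 0 := by nlinarith [sq_nonneg p.imI, sq_nonneg p.imJ, sq_nonneg p.imK]
    have h2 : p.imJ = 0 := by nlinarith [sq_nonneg p.imI, sq_nonneg p.imJ, sq_nonneg p.imK]
    have h3 : p.imK = 0 := by nlinarith [sq_nonneg p.imI, sq_nonneg p.imJ, sq_nonneg p.imK]
    ext <;> simp [h1, h2, h3]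

lemma rad_pos {p : ℍ[ℝ]} (hp : Quaternion.im p ≠ 0) : 0 < rad p :=
  Real.sqrt_pos.2 (sq_sum_pos hp)

lemma rad_sq (p : ℍ[ℝ]) : (rad p)^2 = p.imI^2 + p.imJ^2 + p.imK^2 :=
  Real.sq_sqrt (by positivity)

lemma coe_eq_smul_one (x : ℝ) : (x : ℍ[ℝ]) = x • (1 : ℍ[ℝ]) := by
  rw [← Quaternion.algebraMap_def, Algebra.algebraMap_eq_smul_one]

lemma im_of_re_zero {e : ℍ[ℝ]} (he : e.re = 0) : Quaternion.im e = e := by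
  ext <;> simp [he]

def gg (F : ℂ → ℂ) (q : ℍ[ℝ]) : ℍ[ℝ] :=
  (((F ⟨q.re, rad q⟩).re : ℝ) : ℍ[ℝ]) +
    ((rad q)⁻¹ • Quaternion.im q) * (((F ⟨q.re, rad q⟩).im : ℝ) : ℍ[ℝ])

lemma complex_path (F : ℂ → ℂ) (c : ℂ) (t r : ℝ) (ρ : ℝ → ℝ) (ρ' : ℝ)
    (hρ : HasDerivAt ρ ρ' 0) (hρ0 : ρ 0 = r)
    (hc : HasDerivAt F c ⟨t, r⟩) :
    HasDerivAt (fun s => F ⟨t, ρ s⟩) (ρ' • (Complex.I * c)) 0 := by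
  have hψ : HasDerivAt (fun s => ((t : ℂ) + (ρ s : ℂ) * Complex.I)) (ρ' * Complex.I) 0 :=
    ((hρ.ofReal_comp).mul_const Complex.I).const_add _
  have hψ' : HasDerivAt (fun s => (⟨t, ρ s⟩ : ℂ)) (ρ' * Complex.I) 0 := by
    simpa only [Complex.mk_eq_add_mul_I] using hψ
  have := (hc.hasFDerivAt.restrictScalars ℝ).comp_hasDerivAt_of_eq 0 hψ' (by rw [hρ0])
  simpa [smul_eq_mul, Function.comp_def, mul_assoc] using this

lemma re_path {u : ℝ → ℂ} {u' : ℂ} (h : HasDerivAt u u' 0) :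
    HasDerivAt (fun s => ((u s).re : ℍ[ℝ])) ((u'.re : ℝ) • (1:ℍ[ℝ])) 0 := by
  have h1 : HasDerivAt (fun s => (u s).re) u'.re 0 :=
    (Complex.reCLM.hasFDerivAt.comp_hasDerivAt 0 h)
  simpa only [← coe_eq_smul_one] using h1.smul_const (1 : ℍ[ℝ])

lemma im_path {u : ℝ → ℂ} {u' : ℂ} (h : HasDerivAt u u' 0) :
    HasDerivAt (fun s => ((u s).im : ℍ[ℝ])) ((u'.im : ℝ) • (1:ℍ[ℝ])) 0 := by
  have h1 : HasDerivAt (fun s => (u s).im) u'.im 0 :=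
    (Complex.imCLM.hasFDerivAt.comp_hasDerivAt 0 h)
  simpa only [← coe_eq_smul_one] using h1.smul_const (1 : ℍ[ℝ])

lemma key_dir (F : ℂ → ℂ) {c : ℂ} (p : ℍ[ℝ]) (hp : Quaternion.im p ≠ 0)
    (hc : HasDerivAt F c ⟨p.re, rad p⟩)
    (e : ℍ[ℝ]) (he : e.re = 0) :
    HasDerivAt (fun s : ℝ => gg F (p + s • e))
      ((((((p.imI * e.imI + p.imJ * e.imJ + p.imK * e.imK)/(rad p)) • (Complex.I * c)).re : ℝ) : ℍ[ℝ])
       + ((-((p.imI * e.imI + p.imJ * e.imJ + p.imK * e.imK)/(rad p)^3)) • Quaternion.im p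
            + (rad p)⁻¹ • e) * (((F ⟨p.re, rad p⟩).im : ℝ) : ℍ[ℝ])
       + ((rad p)⁻¹ • Quaternion.im p) *
           (((((p.imI * e.imI + p.imJ * e.imJ + p.imK * e.imK)/(rad p)) • (Complex.I * c)).im : ℝ) : ℍ[ℝ]))
      0 := by
  set x := p.imI; set y := p.imJ; set z := p.imK
  set r := rad p with hr
  have hrpos : 0 < r := rad_pos hp
  set χ := x * e.imI + y * e.imJ + z * e.imK with hχ
  set φ : ℝ → ℝ := fun s => (x + s * e.imI)^2 + (y + s * e.imJ)^2 + (z + s * e.imK)^2 with hφdef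
  have hφ0 : φ 0 = x^2 + y^2 + z^2 := by simp [hφdef]
  have hφ : HasDerivAt φ (2*χ) 0 := by
    have h1 : HasDerivAt (fun s : ℝ => x + s * e.imI) e.imI 0 := by
      simpa using ((hasDerivAt_id (0:ℝ)).mul_const e.imI).const_add x
    have h2 : HasDerivAt (fun s : ℝ => y + s * e.imJ) e.imJ 0 := by
      simpa using ((hasDerivAt_id (0:ℝ)).mul_const e.imJ).const_add y
    have h3 : HasDerivAt (fun s : ℝ => z + s * e.imK) e.imK 0 := by
      simpa using ((hasDerivAt_id (0:ℝ)).mul_const e.imK).const_add z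
    have := ((h1.pow 2).add (h2.pow 2)).add (h3.pow 2)
    convert this using 1
    · rfl
    · rfl
    · rfl
    simp [hχ]; ring
  set ρ : ℝ → ℝ := fun s => Real.sqrt (φ s) with hρdef
  have hρ0 : ρ 0 = r := by rw [hρdef]; simp only [hφ0]; rfl
  have hρ : HasDerivAt ρ (χ/r) 0 := by
    have hφ0ne : φ 0 ≠ 0 := by rw [hφ0]; nlinarith [sq_sum_pos hp, hφ0]
    have := (Real.hasDerivAt_sqrt hφ0ne).comp 0 hφ
    convert this using 1
    · rfl
    · rfl
    · rfl
    have : Real.sqrt (φ 0) = r := hρ0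
    rw [this]; field_simp
  -- F along the path
  have hFp : HasDerivAt (fun s => F ⟨p.re, ρ s⟩) ((χ/r) • (Complex.I * c)) 0 :=
    complex_path F c p.re r ρ (χ/r) hρ hρ0 hc
  set d := (χ/r) • (Complex.I * c) with hd
  have hu : HasDerivAt (fun s => (((F ⟨p.re, ρ s⟩).re : ℝ) : ℍ[ℝ])) ((d.re : ℝ) • (1:ℍ[ℝ])) 0 :=
    re_path hFp
  have hv : HasDerivAt (fun s => (((F ⟨p.re, ρ s⟩).im : ℝ) : ℍ[ℝ])) ((d.im : ℝ) • (1:ℍ[ℝ])) 0 :=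
    im_path hFp
  -- the vector factor
  have hw : HasDerivAt (fun s : ℝ => Quaternion.im p + s • e) e 0 := by
    simpa using ((hasDerivAt_id (0:ℝ)).smul_const e).const_add (Quaternion.im p)
  have hinv : HasDerivAt (fun s => (ρ s)⁻¹) (-(χ/r)/r^2) 0 := by
    have := hρ.inv (by rw [hρ0]; exact hrpos.ne')
    rwa [hρ0] at this
  have hA : HasDerivAt (fun s => (ρ s)⁻¹ • (Quaternion.im p + s • e))
      ((ρ 0)⁻¹ • e + (-(χ/r)/r^2) • (Quaternion.im p + (0:ℝ) • e)) 0 := hinv.smul hw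
  have hA' : HasDerivAt (fun s => (ρ s)⁻¹ • (Quaternion.im p + s • e))
      ((-(χ/r^3)) • Quaternion.im p + r⁻¹ • e) 0 := by
    have hsc : -(χ/r^3) = -(χ/r)/r^2 := by field_simp
    rw [hsc]
    convert hA using 1
    rw [hρ0]
    simp only [zero_smul, add_zero]
    rw [add_comm]
  -- product
  have hprod := hA'.mul hv
  have htot := hu.add hprod
  -- identify the function
  have hfun : (fun s : ℝ => gg F (p + s • e)) =
      (fun s => (((F ⟨p.re, ρ s⟩).re : ℝ) : ℍ[ℝ]) +
        (ρ s)⁻¹ • (Quaternion.im p + s • e) * (((F ⟨p.re, ρ s⟩).im : ℝ) : ℍ[ℝ])) := by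
    funext s
    have h1 : (p + s • e).re = p.re := by simp [he]
    have h2 : rad (p + s • e) = ρ s := by
      simp [rad, hρdef, hφdef, smul_eq_mul]
      rfl
    have h3 : Quaternion.im (p + s • e) = Quaternion.im p + s • e := by
      rw [Quaternion.im_add, Quaternion.im_smul, im_of_re_zero he]
    rw [gg, h1, h2, h3]
  rw [hfun]
  convert htot using 1
  · rfl
  · rfl
  · rfl
  rw [hρ0]
  simp only [zero_smul, add_zero, ← coe_eq_smul_one]
  rw [add_assoc]

lemma key_t (F : ℂ → ℂ) {c : ℂ} (p : ℍ[ℝ]) (hc : HasDerivAt F c ⟨p.re, rad p⟩) :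
    HasDerivAt (fun s : ℝ => gg F (p + s • (1:ℍ[ℝ])))
      ((c.re : ℍ[ℝ]) + ((rad p)⁻¹ • Quaternion.im p) * (c.im : ℍ[ℝ])) 0 := by
  have hψ : HasDerivAt (fun s : ℝ => ((p.re + s : ℝ) : ℂ) + (rad p : ℂ) * Complex.I) 1 0 := by
    have : HasDerivAt (fun s : ℝ => (p.re + s : ℝ)) 1 0 := by
      simpa using (hasDerivAt_id (0:ℝ)).const_add p.re
    exact (this.ofReal_comp).add_const _
  have hψ' : HasDerivAt (fun s : ℝ => (⟨p.re + s, rad p⟩ : ℂ)) 1 0 := by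
    simpa only [Complex.mk_eq_add_mul_I] using hψ
  have hFp : HasDerivAt (fun s : ℝ => F ⟨p.re + s, rad p⟩) c 0 := by
    have := (hc.hasFDerivAt.restrictScalars ℝ).comp_hasDerivAt_of_eq 0 hψ' (by norm_num)
    simpa [Function.comp_def] using this
  have hu := re_path hFp
  have hv := im_path hFp
  have htot := hu.add (hv.const_mul ((rad p)⁻¹ • Quaternion.im p))
  have hfun : (fun s : ℝ => gg F (p + s • (1:ℍ[ℝ]))) =
      (fun s : ℝ => (((F ⟨p.re + s, rad p⟩).re : ℝ) : ℍ[ℝ]) +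
        ((rad p)⁻¹ • Quaternion.im p) * (((F ⟨p.re + s, rad p⟩).im : ℝ) : ℍ[ℝ])) := by
    funext s
    have h1 : (p + s • (1:ℍ[ℝ])).re = p.re + s := by simp
    have h2 : rad (p + s • (1:ℍ[ℝ])) = rad p := by simp [rad]
    have h3 : Quaternion.im (p + s • (1:ℍ[ℝ])) = Quaternion.im p := by
      ext <;> simp
    rw [gg, h1, h2, h3]
  rw [hfun]
  convert htot using 1
  · rfl
  · rfl
  · rfl
  simp only [← coe_eq_smul_one]

def reLM : ℍ[ℝ] →ₗ[ℝ] ℝ where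
  toFun q := q.re
  map_add' _ _ := rfl
  map_smul' _ _ := rfl

def imILM : ℍ[ℝ] →ₗ[ℝ] ℝ where
  toFun q := q.imI
  map_add' _ _ := rfl
  map_smul' _ _ := rfl

def imJLM : ℍ[ℝ] →ₗ[ℝ] ℝ where
  toFun q := q.imJ
  map_add' _ _ := rfl
  map_smul' _ _ := rfl

def imKLM : ℍ[ℝ] →ₗ[ℝ] ℝ where
  toFun q := q.imK
  map_add' _ _ := rfl
  map_smul' _ _ := rfl

lemma diff_re : Differentiable ℝ (fun q : ℍ[ℝ] => q.re) :=
  reLM.toContinuousLinearMap.differentiable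

lemma diff_imI : Differentiable ℝ (fun q : ℍ[ℝ] => q.imI) :=
  imILM.toContinuousLinearMap.differentiable

lemma diff_imJ : Differentiable ℝ (fun q : ℍ[ℝ] => q.imJ) :=
  imJLM.toContinuousLinearMap.differentiable

lemma diff_imK : Differentiable ℝ (fun q : ℍ[ℝ] => q.imK) :=
  imKLM.toContinuousLinearMap.differentiable

lemma diff_coe_re : Differentiable ℝ (fun q : ℍ[ℝ] => ((q.re : ℝ) : ℍ[ℝ])) := by
  have := diff_re.smul_const (1 : ℍ[ℝ])
  simpa only [← coe_eq_smul_one] using this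

lemma diff_im : Differentiable ℝ (fun q : ℍ[ℝ] => Quaternion.im q) := by
  have : Differentiable ℝ (fun q : ℍ[ℝ] => q - ((q.re : ℝ) : ℍ[ℝ])) :=
    differentiable_id.sub diff_coe_re
  simpa only [Quaternion.sub_re_self] using this

lemma rad_diff {p : ℍ[ℝ]} (hp : Quaternion.im p ≠ 0) : DifferentiableAt ℝ rad p := by
  have hsq : DifferentiableAt ℝ (fun q : ℍ[ℝ] => q.imI^2 + q.imJ^2 + q.imK^2) p :=
    (((diff_imI p).pow 2).add ((diff_imJ p).pow 2)).add ((diff_imK p).pow 2)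
  exact hsq.sqrt (sq_sum_pos hp).ne'

lemma gg_diff (F : ℂ → ℂ) (hF : DifferentiableOn ℂ F {z : ℂ | 0 < z.im})
    {p : ℍ[ℝ]} (hp : Quaternion.im p ≠ 0) : DifferentiableAt ℝ (gg F) p := by
  have hrad := rad_diff hp
  have hz : DifferentiableAt ℝ (fun q : ℍ[ℝ] => (⟨q.re, rad q⟩ : ℂ)) p := by
    have : DifferentiableAt ℝ
        (fun q : ℍ[ℝ] => ((q.re : ℝ) : ℂ) + ((rad q : ℝ) : ℂ) * Complex.I) p :=
      (Complex.ofRealCLM.differentiableAt.comp p (diff_re p)).add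
        ((Complex.ofRealCLM.differentiableAt.comp p hrad).mul_const Complex.I)
    simpa only [Complex.mk_eq_add_mul_I] using this
  have hopen : IsOpen {z : ℂ | 0 < z.im} := isOpen_lt continuous_const Complex.continuous_im
  have hmem : (⟨p.re, rad p⟩ : ℂ) ∈ {z : ℂ | 0 < z.im} := by
    simp only [Set.mem_setOf_eq]
    exact rad_pos hp
  have hFz : DifferentiableAt ℝ (fun q : ℍ[ℝ] => F ⟨q.re, rad q⟩) p :=
    ((hF.differentiableAt (hopen.mem_nhds hmem)).restrictScalars ℝ).comp p hz
  have hu : DifferentiableAt ℝ (fun q : ℍ[ℝ] => (((F ⟨q.re, rad q⟩).re : ℝ) : ℍ[ℝ])) p := by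
    have := (Complex.reCLM.differentiableAt.comp p hFz).smul_const (1 : ℍ[ℝ])
    simpa only [← coe_eq_smul_one, Function.comp_apply, Complex.reCLM_apply] using this
  have hv : DifferentiableAt ℝ (fun q : ℍ[ℝ] => (((F ⟨q.re, rad q⟩).im : ℝ) : ℍ[ℝ])) p := by
    have := (Complex.imCLM.differentiableAt.comp p hFz).smul_const (1 : ℍ[ℝ])
    simpa only [← coe_eq_smul_one, Function.comp_apply, Complex.imCLM_apply] using this
  exact hu.add (((hrad.inv (rad_pos hp).ne').smul (diff_im p)).mul hv)


/-- For `f` obtained from a holomorphic `F = u + iv` by Fueter's construction,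
`D_l f = D_r f = -2 v(t,r) / r` on the set of quaternions with nonzero imaginary part. -/
theorem fueter_construction_Dl_Dr
    (F : ℂ → ℂ) (hF : DifferentiableOn ℂ F {z : ℂ | 0 < z.im})
    (f : ℍ[ℝ] → ℍ[ℝ])
    (hf : ∀ p : ℍ[ℝ], Quaternion.im p ≠ 0 →
      f p = ((F ⟨p.re, rad p⟩).re : ℍ[ℝ]) + iot p * ((F ⟨p.re, rad p⟩).im : ℍ[ℝ])) :
    ∀ p : ℍ[ℝ], Quaternion.im p ≠ 0 →
      Dl f p = ((-2 * (F ⟨p.re, rad p⟩).im / rad p : ℝ) : ℍ[ℝ]) ∧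
      Dr f p = ((-2 * (F ⟨p.re, rad p⟩).im / rad p : ℝ) : ℍ[ℝ]) := by
  intro p hp
  have hrpos := rad_pos hp
  have hopen : IsOpen {q : ℍ[ℝ] | Quaternion.im q ≠ 0} :=
    isOpen_ne.preimage Quaternion.continuous_im
  have hev : f =ᶠ[nhds p] gg F := by
    filter_upwards [hopen.mem_nhds hp] with q hq
    rw [hf q hq]; rfl
  have hfd : fderiv ℝ f p = fderiv ℝ (gg F) p := hev.fderiv_eq
  have hopenC : IsOpen {z : ℂ | 0 < z.im} := isOpen_lt continuous_const Complex.continuous_im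
  have hFd : DifferentiableAt ℂ F ⟨p.re, rad p⟩ :=
    hF.differentiableAt (hopenC.mem_nhds (by simpa using hrpos))
  set c := deriv F ⟨p.re, rad p⟩ with hcdef
  have hc : HasDerivAt F c ⟨p.re, rad p⟩ := hFd.hasDerivAt
  have hd := gg_diff F hF hp
  have line : ∀ (e : ℍ[ℝ]) (D : ℍ[ℝ]), HasDerivAt (fun s : ℝ => gg F (p + s • e)) D 0 →
      fderiv ℝ f p e = D := by
    intro e D hD
    have hline : HasDerivAt (fun s : ℝ => p + s • e) e 0 := by
      simpa using ((hasDerivAt_id (0:ℝ)).smul_const e).const_add p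
    have h2 : HasDerivAt (fun s : ℝ => gg F (p + s • e)) (fderiv ℝ (gg F) p e) 0 :=
      hd.hasFDerivAt.comp_hasDerivAt_of_eq 0 hline (by simp)
    rw [hfd]; exact h2.unique hD
  have ht : pt f p = (c.re : ℍ[ℝ]) + ((rad p)⁻¹ • Quaternion.im p) * (c.im : ℍ[ℝ]) :=
    line 1 _ (key_t F p hc)
  have hx := line qi _ (key_dir F p hp hc qi rfl)
  have hy := line qj _ (key_dir F p hp hc qj rfl)
  have hz := line qk _ (key_dir F p hp hc qk rfl)
  set r := rad p with hr
  set v := (F ⟨p.re, r⟩).im with hv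
  set a := c.re with ha
  set b := c.im with hb
  have hrsq : r^2 = p.imI^2 + p.imJ^2 + p.imK^2 := rad_sq p
  have hrne : r ≠ 0 := hrpos.ne'
  have e2 : r⁻¹^2 * (p.imI^2 + p.imJ^2 + p.imK^2) = 1 := by
    rw [← hrsq]; field_simp
  have e3 : r⁻¹^3 * (p.imI^2 + p.imJ^2 + p.imK^2) = r⁻¹ := by
    rw [← hrsq]; field_simp
  have e4 : r⁻¹^4 * (p.imI^2 + p.imJ^2 + p.imK^2) = r⁻¹^2 := by
    rw [← hrsq]; field_simp
  constructor
  · rw [Dl, pt, px, py, pz, ← pt, ht, hx, hy, hz]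
    apply Quaternion.ext
    ·
      simp only [Quaternion.re_add, Quaternion.re_mul, Quaternion.imI_add, Quaternion.imI_mul,
        Quaternion.imJ_add, Quaternion.imJ_mul, Quaternion.imK_add, Quaternion.imK_mul,
        Quaternion.re_smul, Quaternion.imI_smul, Quaternion.imJ_smul, Quaternion.imK_smul,
        Quaternion.re_coe, Quaternion.imI_coe, Quaternion.imJ_coe, Quaternion.imK_coe,
        Quaternion.re_im, Quaternion.imI_im, Quaternion.imJ_im, Quaternion.imK_im,
        qi_re, qi_imI, qi_imJ, qi_imK, qj_re, qj_imI, qj_imJ, qj_imK,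
        qk_re, qk_imI, qk_imJ, qk_imK, Complex.smul_re, Complex.smul_im,
        Complex.mul_re, Complex.mul_im, Complex.I_re, Complex.I_im, smul_eq_mul]
      ring_nf
      linear_combination (-a) * e2 + v * e3
    all_goals
      simp only [Quaternion.re_add, Quaternion.re_mul, Quaternion.imI_add, Quaternion.imI_mul,
        Quaternion.imJ_add, Quaternion.imJ_mul, Quaternion.imK_add, Quaternion.imK_mul,
        Quaternion.re_smul, Quaternion.imI_smul, Quaternion.imJ_smul, Quaternion.imK_smul,
        Quaternion.re_coe, Quaternion.imI_coe, Quaternion.imJ_coe, Quaternion.imK_coe,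
        Quaternion.re_im, Quaternion.imI_im, Quaternion.imJ_im, Quaternion.imK_im,
        qi_re, qi_imI, qi_imJ, qi_imK, qj_re, qj_imI, qj_imJ, qj_imK,
        qk_re, qk_imI, qk_imJ, qk_imK, Complex.smul_re, Complex.smul_im,
        Complex.mul_re, Complex.mul_im, Complex.I_re, Complex.I_im, smul_eq_mul]
      ring_nf
      rw [← hb]; ring
  · rw [Dr, pt, px, py, pz, ← pt, ht, hx, hy, hz]
    apply Quaternion.ext
    ·
      simp only [Quaternion.re_add, Quaternion.re_mul, Quaternion.imI_add, Quaternion.imI_mul,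
        Quaternion.imJ_add, Quaternion.imJ_mul, Quaternion.imK_add, Quaternion.imK_mul,
        Quaternion.re_smul, Quaternion.imI_smul, Quaternion.imJ_smul, Quaternion.imK_smul,
        Quaternion.re_coe, Quaternion.imI_coe, Quaternion.imJ_coe, Quaternion.imK_coe,
        Quaternion.re_im, Quaternion.imI_im, Quaternion.imJ_im, Quaternion.imK_im,
        qi_re, qi_imI, qi_imJ, qi_imK, qj_re, qj_imI, qj_imJ, qj_imK,
        qk_re, qk_imI, qk_imJ, qk_imK, Complex.smul_re, Complex.smul_im,
        Complex.mul_re, Complex.mul_im, Complex.I_re, Complex.I_im, smul_eq_mul]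
      ring_nf
      linear_combination (-a) * e2 + v * e3
    all_goals
      simp only [Quaternion.re_add, Quaternion.re_mul, Quaternion.imI_add, Quaternion.imI_mul,
        Quaternion.imJ_add, Quaternion.imJ_mul, Quaternion.imK_add, Quaternion.imK_mul,
        Quaternion.re_smul, Quaternion.imI_smul, Quaternion.imJ_smul, Quaternion.imK_smul,
        Quaternion.re_coe, Quaternion.imI_coe, Quaternion.imJ_coe, Quaternion.imK_coe,
        Quaternion.re_im, Quaternion.imI_im, Quaternion.imJ_im, Quaternion.imK_im,
        qi_re, qi_imI, qi_imJ, qi_imK, qj_re, qj_imI, qj_imJ, qj_imK,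
        qk_re, qk_imI, qk_imJ, qk_imK, Complex.smul_re, Complex.smul_im,
        Complex.mul_re, Complex.mul_im, Complex.I_re, Complex.I_im, smul_eq_mul]
      ring_nf
      rw [← hb]; ring
end
end

section
/- Let F = u + i·v be holomorphic on the upper half complex plane, and let f : ℍ → ℍ be the function obtained by Fueter's construction, f(p) = u(t,r) + ι(p)·v(t,r). Then on the set of quaternions with nonzero imaginary part, −(1/2)·Δf = D̄_l(g), where g is the real-valued function g(p) = v(t,r)/r, and moreover −(1/2)·Δf(p) = −(ι(p)/r)·(∂f/∂t)(p) + (ι(p)/r²)·v(t,r). -/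
open Quaternion

noncomputable section

def reL : ℍ[ℝ] →L[ℝ] ℝ :=
  LinearMap.toContinuousLinearMap
    { toFun := fun q => q.re, map_add' := fun _ _ => rfl, map_smul' := fun _ _ => rfl }
def iL : ℍ[ℝ] →L[ℝ] ℝ :=
  LinearMap.toContinuousLinearMap
    { toFun := fun q => q.imI, map_add' := fun _ _ => rfl, map_smul' := fun _ _ => rfl }
def jL : ℍ[ℝ] →L[ℝ] ℝ :=
  LinearMap.toContinuousLinearMap
    { toFun := fun q => q.imJ, map_add' := fun _ _ => rfl, map_smul' := fun _ _ => rfl }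
def kL : ℍ[ℝ] →L[ℝ] ℝ :=
  LinearMap.toContinuousLinearMap
    { toFun := fun q => q.imK, map_add' := fun _ _ => rfl, map_smul' := fun _ _ => rfl }
def imL : ℍ[ℝ] →L[ℝ] ℍ[ℝ] :=
  LinearMap.toContinuousLinearMap
    { toFun := fun q => Quaternion.im q,
      map_add' := fun a b => by ext <;> simp,
      map_smul' := fun s a => by ext <;> simp }
def coeL : ℝ →L[ℝ] ℍ[ℝ] :=
  LinearMap.toContinuousLinearMap
    { toFun := fun x => (x : ℍ[ℝ]),
      map_add' := fun a b => by ext <;> simp,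
      map_smul' := fun s a => by ext <;> simp }

@[simp] lemma reL_apply (q : ℍ[ℝ]) : reL q = q.re := rfl
@[simp] lemma iL_apply (q : ℍ[ℝ]) : iL q = q.imI := rfl
@[simp] lemma jL_apply (q : ℍ[ℝ]) : jL q = q.imJ := rfl
@[simp] lemma kL_apply (q : ℍ[ℝ]) : kL q = q.imK := rfl
@[simp] lemma imL_apply (q : ℍ[ℝ]) : imL q = Quaternion.im q := rfl
@[simp] lemma coeL_apply (x : ℝ) : coeL x = (x : ℍ[ℝ]) := rfl

lemma rad_pos_s4 {q : ℍ[ℝ]} (hq : Quaternion.im q ≠ 0) : 0 < rad q := by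
  apply Real.sqrt_pos.2
  by_contra h
  push_neg at h
  apply hq
  ext <;> simp <;> nlinarith [sq_nonneg q.imI, sq_nonneg q.imJ, sq_nonneg q.imK]

lemma sq_rad (q : ℍ[ℝ]) : (rad q)^2 = q.imI^2 + q.imJ^2 + q.imK^2 :=
  Real.sq_sqrt (by positivity)

def dR (q : ℍ[ℝ]) : ℍ[ℝ] →L[ℝ] ℝ := (rad q)⁻¹ • (q.imI • iL + q.imJ • jL + q.imK • kL)

@[simp] lemma dR_apply (q h : ℍ[ℝ]) :
    dR q h = (rad q)⁻¹ * (q.imI * h.imI + q.imJ * h.imJ + q.imK * h.imK) := by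
  simp only [dR, ContinuousLinearMap.smul_apply, ContinuousLinearMap.add_apply,
    iL_apply, jL_apply, kL_apply, smul_eq_mul]
  try ring

lemma hasFDerivAt_rad {q : ℍ[ℝ]} (hq : Quaternion.im q ≠ 0) :
    HasFDerivAt rad (dR q) q := by
  have h1 : HasFDerivAt (fun p : ℍ[ℝ] => p.imI^2 + p.imJ^2 + p.imK^2)
      ((2*q.imI) • iL + (2*q.imJ) • jL + (2*q.imK) • kL) q := by
    have hi := (iL.hasFDerivAt (x := q)).mul (iL.hasFDerivAt (x := q))
    have hj := (jL.hasFDerivAt (x := q)).mul (jL.hasFDerivAt (x := q))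
    have hk := (kL.hasFDerivAt (x := q)).mul (kL.hasFDerivAt (x := q))
    have := (hi.add hj).add hk
    simp only [pow_two]
    refine this.congr_fderiv ?_
    ext h
    simp only [ContinuousLinearMap.add_apply, ContinuousLinearMap.smul_apply,
      iL_apply, jL_apply, kL_apply, smul_eq_mul]
    ring
  have hpos : 0 < q.imI^2 + q.imJ^2 + q.imK^2 := by
    have := rad_pos_s4 hq
    have := sq_rad q
    nlinarith
  have h2 := h1.sqrt (ne_of_gt hpos)
  refine h2.congr_fderiv ?_
  ext h
  have hr := rad_pos_s4 hq
  have hs : Real.sqrt (q.imI^2 + q.imJ^2 + q.imK^2) = rad q := rfl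
  simp only [ContinuousLinearMap.smul_apply, ContinuousLinearMap.add_apply, dR_apply,
    iL_apply, jL_apply, kL_apply, smul_eq_mul, hs]
  field_simp

/-! complex layer -/

def cq (q : ℍ[ℝ]) : ℂ := ⟨q.re, rad q⟩

def cd (q : ℍ[ℝ]) : ℍ[ℝ] →L[ℝ] ℂ :=
  Complex.ofRealCLM.comp reL + (dR q).smulRight Complex.I

@[simp] lemma cd_apply (q h : ℍ[ℝ]) : cd q h = (h.re : ℂ) + dR q h • Complex.I := rfl

lemma hasFDerivAt_cq {q : ℍ[ℝ]} (hq : Quaternion.im q ≠ 0) :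
    HasFDerivAt cq (cd q) q := by
  have h1 : HasFDerivAt (fun p : ℍ[ℝ] => ((p.re : ℂ)) + rad p • Complex.I) (cd q) q := by
    exact (Complex.ofRealCLM.comp reL).hasFDerivAt.add
      ((hasFDerivAt_rad hq).smul_const Complex.I)
  have : cq = fun p : ℍ[ℝ] => ((p.re : ℂ)) + rad p • Complex.I := by
    funext p
    rw [cq, Complex.mk_eq_add_mul_I, Complex.real_smul]
  rw [this]
  exact h1

lemma upper_mem {q : ℍ[ℝ]} (hq : Quaternion.im q ≠ 0) : cq q ∈ {z : ℂ | 0 < z.im} := by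
  simpa [cq] using rad_pos_s4 hq

lemma isOpen_upper : IsOpen {z : ℂ | 0 < z.im} := isOpen_lt continuous_const Complex.continuous_im

/-- key: real/imag parts of `G ∘ cq` for complex-differentiable `G`. -/
lemma hasFDerivAt_parts {G : ℂ → ℂ} (hG : DifferentiableOn ℂ G {z : ℂ | 0 < z.im})
    {q : ℍ[ℝ]} (hq : Quaternion.im q ≠ 0) :
    HasFDerivAt (fun p => (G (cq p)).re)
      ((deriv G (cq q)).re • reL - (deriv G (cq q)).im • dR q) q ∧
    HasFDerivAt (fun p => (G (cq p)).im)
      ((deriv G (cq q)).im • reL + (deriv G (cq q)).re • dR q) q := by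
  have hmem := upper_mem hq
  have hG' : HasDerivAt G (deriv G (cq q)) (cq q) := by
    have := (hG.differentiableAt (isOpen_upper.mem_nhds hmem))
    exact this.hasDerivAt
  have hreal : HasFDerivAt G
      ((ContinuousLinearMap.smulRight (1 : ℂ →L[ℂ] ℂ) (deriv G (cq q))).restrictScalars ℝ)
      (cq q) := hG'.hasFDerivAt.restrictScalars ℝ
  have hcomp := hreal.comp q (hasFDerivAt_cq hq)
  constructor
  · have := Complex.reCLM.hasFDerivAt.comp q hcomp
    refine this.congr_fderiv ?_
    ext h
    simp [Complex.ext_iff, smul_eq_mul]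
    ring
  · have := Complex.imCLM.hasFDerivAt.comp q hcomp
    refine this.congr_fderiv ?_
    ext h
    simp [Complex.ext_iff, smul_eq_mul]
    ring

/-! shape lemma -/

lemma hasFDerivAt_shape {α β γ : ℍ[ℝ] → ℝ} {α' β' γ' : ℍ[ℝ] →L[ℝ] ℝ} {p : ℍ[ℝ]} (d : ℍ[ℝ])
    (hα : HasFDerivAt α α' p) (hβ : HasFDerivAt β β' p) (hγ : HasFDerivAt γ γ' p) :
    HasFDerivAt (fun q => ((α q : ℍ[ℝ])) + β q • Quaternion.im q + γ q • d)
      (coeL.comp α' + (β p • imL + β'.smulRight (Quaternion.im p)) + γ'.smulRight d) p := by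
  have h1 : HasFDerivAt (fun q : ℍ[ℝ] => ((α q : ℍ[ℝ]))) (coeL.comp α') p :=
    coeL.hasFDerivAt.comp p hα
  have h2 : HasFDerivAt (fun q : ℍ[ℝ] => β q • Quaternion.im q)
      (β p • imL + β'.smulRight (Quaternion.im p)) p := by
    have := hβ.smul (imL.hasFDerivAt (x := p))
    exact this
  exact (h1.add h2).add (hγ.smul_const d)

section withF
variable (F : ℂ → ℂ)

def uu (q : ℍ[ℝ]) : ℝ := (F (cq q)).re
def vv (q : ℍ[ℝ]) : ℝ := (F (cq q)).im
def aa (q : ℍ[ℝ]) : ℝ := (deriv F (cq q)).re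
def bb (q : ℍ[ℝ]) : ℝ := (deriv F (cq q)).im

def g1 (q : ℍ[ℝ]) : ℍ[ℝ] := ((aa F q : ℍ[ℝ])) + (bb F q * (rad q)⁻¹) • Quaternion.im q + (0:ℝ) • (0:ℍ[ℝ])
def gx (q : ℍ[ℝ]) : ℍ[ℝ] := ((-(bb F q * (q.imI * (rad q)⁻¹)) : ℝ) : ℍ[ℝ])
  + (aa F q * q.imI * ((rad q)⁻¹ * (rad q)⁻¹) - vv F q * q.imI * ((rad q)⁻¹ * (rad q)⁻¹ * (rad q)⁻¹)) • Quaternion.im q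
  + (vv F q * (rad q)⁻¹) • qi
def gy (q : ℍ[ℝ]) : ℍ[ℝ] := ((-(bb F q * (q.imJ * (rad q)⁻¹)) : ℝ) : ℍ[ℝ])
  + (aa F q * q.imJ * ((rad q)⁻¹ * (rad q)⁻¹) - vv F q * q.imJ * ((rad q)⁻¹ * (rad q)⁻¹ * (rad q)⁻¹)) • Quaternion.im q
  + (vv F q * (rad q)⁻¹) • qj
def gz (q : ℍ[ℝ]) : ℍ[ℝ] := ((-(bb F q * (q.imK * (rad q)⁻¹)) : ℝ) : ℍ[ℝ])
  + (aa F q * q.imK * ((rad q)⁻¹ * (rad q)⁻¹) - vv F q * q.imK * ((rad q)⁻¹ * (rad q)⁻¹ * (rad q)⁻¹)) • Quaternion.im q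
  + (vv F q * (rad q)⁻¹) • qk

variable {F}

lemma hasFDerivAt_uu (hF : DifferentiableOn ℂ F {z : ℂ | 0 < z.im})
    {q : ℍ[ℝ]} (hq : Quaternion.im q ≠ 0) :
    HasFDerivAt (uu F) (aa F q • reL - bb F q • dR q) q := (hasFDerivAt_parts hF hq).1

lemma hasFDerivAt_vv (hF : DifferentiableOn ℂ F {z : ℂ | 0 < z.im})
    {q : ℍ[ℝ]} (hq : Quaternion.im q ≠ 0) :
    HasFDerivAt (vv F) (bb F q • reL + aa F q • dR q) q := (hasFDerivAt_parts hF hq).2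

lemma deriv_diffOn (hF : DifferentiableOn ℂ F {z : ℂ | 0 < z.im}) :
    DifferentiableOn ℂ (deriv F) {z : ℂ | 0 < z.im} :=
  ((hF.analyticOnNhd isOpen_upper).deriv).differentiableOn

lemma hasFDerivAt_aa (hF : DifferentiableOn ℂ F {z : ℂ | 0 < z.im})
    {q : ℍ[ℝ]} (hq : Quaternion.im q ≠ 0) :
    HasFDerivAt (aa F)
      ((deriv (deriv F) (cq q)).re • reL - (deriv (deriv F) (cq q)).im • dR q) q :=
  (hasFDerivAt_parts (deriv_diffOn hF) hq).1

lemma hasFDerivAt_bb (hF : DifferentiableOn ℂ F {z : ℂ | 0 < z.im})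
    {q : ℍ[ℝ]} (hq : Quaternion.im q ≠ 0) :
    HasFDerivAt (bb F)
      ((deriv (deriv F) (cq q)).im • reL + (deriv (deriv F) (cq q)).re • dR q) q :=
  (hasFDerivAt_parts (deriv_diffOn hF) hq).2

end withF

@[simp] lemma im_qi : Quaternion.im qi = qi := rfl
@[simp] lemma im_qj : Quaternion.im qj = qj := rfl
@[simp] lemma im_qk : Quaternion.im qk = qk := rfl

lemma isOpen_S : IsOpen {q : ℍ[ℝ] | Quaternion.im q ≠ 0} := by
  have : {q : ℍ[ℝ] | Quaternion.im q ≠ 0} = imL ⁻¹' ({0}ᶜ) := rfl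
  rw [this]
  exact isOpen_compl_singleton.preimage imL.continuous

section main
variable {F : ℂ → ℂ} (hF : DifferentiableOn ℂ F {z : ℂ | 0 < z.im})
  {f : ℍ[ℝ] → ℍ[ℝ]}
  (hf : ∀ p : ℍ[ℝ], Quaternion.im p ≠ 0 →
      f p = ((F ⟨p.re, rad p⟩).re : ℍ[ℝ]) + iot p * ((F ⟨p.re, rad p⟩).im : ℍ[ℝ]))

include hF hf in
lemma first_derivs {q : ℍ[ℝ]} (hq : Quaternion.im q ≠ 0) :
    pt f q = g1 F q ∧ px f q = gx F q ∧ py f q = gy F q ∧ pz f q = gz F q := by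
  have hr := rad_pos_s4 hq
  have hinv : HasFDerivAt (fun p : ℍ[ℝ] => (rad p)⁻¹) ((-(rad q ^ 2)⁻¹) • dR q) q :=
    (hasDerivAt_inv hr.ne').comp_hasFDerivAt q (hasFDerivAt_rad hq)
  have hw := (hasFDerivAt_vv hF hq).mul hinv
  have hshape := hasFDerivAt_shape (0 : ℍ[ℝ]) (hasFDerivAt_uu hF hq) hw
    (hasFDerivAt_const (0:ℝ) q)
  have hev : f =ᶠ[nhds q] fun p => ((uu F p : ℍ[ℝ])) + (vv F p * (rad p)⁻¹) • Quaternion.im p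
      + (0:ℝ) • (0:ℍ[ℝ]) := by
    filter_upwards [isOpen_S.mem_nhds hq] with p hp
    rw [hf p hp]
    have : iot p * ((F ⟨p.re, rad p⟩).im : ℍ[ℝ])
        = ((F ⟨p.re, rad p⟩).im * (rad p)⁻¹) • Quaternion.im p := by
      rw [iot, smul_mul_assoc, Quaternion.mul_coe_eq_smul, smul_smul, mul_comm]
    rw [this]
    simp [uu, vv, cq]
  have hfq := hshape.congr_of_eventuallyEq hev
  refine ⟨?_, ?_, ?_, ?_⟩
  · rw [pt, hfq.fderiv]
    simp only [ContinuousLinearMap.add_apply, ContinuousLinearMap.comp_apply,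
      ContinuousLinearMap.smulRight_apply, ContinuousLinearMap.smul_apply,
      ContinuousLinearMap.sub_apply, ContinuousLinearMap.neg_apply, coeL_apply, reL_apply,
      dR_apply, imL_apply, smul_eq_mul, g1]
    rw [Quaternion.ext_iff]
    refine ⟨?_, ?_, ?_, ?_⟩ <;>
    · simp only [Quaternion.re_add, Quaternion.imI_add, Quaternion.imJ_add, Quaternion.imK_add,
        Quaternion.re_smul, Quaternion.imI_smul, Quaternion.imJ_smul, Quaternion.imK_smul,
        Quaternion.re_coe, Quaternion.imI_coe, Quaternion.imJ_coe, Quaternion.imK_coe,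
        Quaternion.re_im, Quaternion.imI_im, Quaternion.imJ_im, Quaternion.imK_im,
        Quaternion.re_one, Quaternion.imI_one, Quaternion.imJ_one, Quaternion.imK_one,
        Quaternion.re_zero, Quaternion.imI_zero, Quaternion.imJ_zero, Quaternion.imK_zero,
        qi_re, qi_imI, qi_imJ, qi_imK, qj_re, qj_imI, qj_imJ, qj_imK,
        qk_re, qk_imI, qk_imJ, qk_imK, ContinuousLinearMap.zero_apply, smul_eq_mul]
      ring
  · rw [px, hfq.fderiv]
    simp only [ContinuousLinearMap.add_apply, ContinuousLinearMap.comp_apply,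
      ContinuousLinearMap.smulRight_apply, ContinuousLinearMap.smul_apply,
      ContinuousLinearMap.sub_apply, ContinuousLinearMap.neg_apply, coeL_apply, reL_apply,
      dR_apply, imL_apply, smul_eq_mul, gx]
    rw [Quaternion.ext_iff]
    refine ⟨?_, ?_, ?_, ?_⟩ <;>
    · simp only [Quaternion.re_add, Quaternion.imI_add, Quaternion.imJ_add, Quaternion.imK_add,
        Quaternion.re_smul, Quaternion.imI_smul, Quaternion.imJ_smul, Quaternion.imK_smul,
        Quaternion.re_coe, Quaternion.imI_coe, Quaternion.imJ_coe, Quaternion.imK_coe,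
        Quaternion.re_im, Quaternion.imI_im, Quaternion.imJ_im, Quaternion.imK_im,
        Quaternion.re_one, Quaternion.imI_one, Quaternion.imJ_one, Quaternion.imK_one,
        Quaternion.re_zero, Quaternion.imI_zero, Quaternion.imJ_zero, Quaternion.imK_zero,
        qi_re, qi_imI, qi_imJ, qi_imK, qj_re, qj_imI, qj_imJ, qj_imK,
        qk_re, qk_imI, qk_imJ, qk_imK, ContinuousLinearMap.zero_apply, smul_eq_mul, Pi.mul_apply]
      ring
  · rw [py, hfq.fderiv]
    simp only [ContinuousLinearMap.add_apply, ContinuousLinearMap.comp_apply,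
      ContinuousLinearMap.smulRight_apply, ContinuousLinearMap.smul_apply,
      ContinuousLinearMap.sub_apply, ContinuousLinearMap.neg_apply, coeL_apply, reL_apply,
      dR_apply, imL_apply, smul_eq_mul, gy]
    rw [Quaternion.ext_iff]
    refine ⟨?_, ?_, ?_, ?_⟩ <;>
    · simp only [Quaternion.re_add, Quaternion.imI_add, Quaternion.imJ_add, Quaternion.imK_add,
        Quaternion.re_smul, Quaternion.imI_smul, Quaternion.imJ_smul, Quaternion.imK_smul,
        Quaternion.re_coe, Quaternion.imI_coe, Quaternion.imJ_coe, Quaternion.imK_coe,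
        Quaternion.re_im, Quaternion.imI_im, Quaternion.imJ_im, Quaternion.imK_im,
        Quaternion.re_one, Quaternion.imI_one, Quaternion.imJ_one, Quaternion.imK_one,
        Quaternion.re_zero, Quaternion.imI_zero, Quaternion.imJ_zero, Quaternion.imK_zero,
        qi_re, qi_imI, qi_imJ, qi_imK, qj_re, qj_imI, qj_imJ, qj_imK,
        qk_re, qk_imI, qk_imJ, qk_imK, ContinuousLinearMap.zero_apply, smul_eq_mul, Pi.mul_apply]
      ring
  · rw [pz, hfq.fderiv]
    simp only [ContinuousLinearMap.add_apply, ContinuousLinearMap.comp_apply,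
      ContinuousLinearMap.smulRight_apply, ContinuousLinearMap.smul_apply,
      ContinuousLinearMap.sub_apply, ContinuousLinearMap.neg_apply, coeL_apply, reL_apply,
      dR_apply, imL_apply, smul_eq_mul, gz]
    rw [Quaternion.ext_iff]
    refine ⟨?_, ?_, ?_, ?_⟩ <;>
    · simp only [Quaternion.re_add, Quaternion.imI_add, Quaternion.imJ_add, Quaternion.imK_add,
        Quaternion.re_smul, Quaternion.imI_smul, Quaternion.imJ_smul, Quaternion.imK_smul,
        Quaternion.re_coe, Quaternion.imI_coe, Quaternion.imJ_coe, Quaternion.imK_coe,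
        Quaternion.re_im, Quaternion.imI_im, Quaternion.imJ_im, Quaternion.imK_im,
        Quaternion.re_one, Quaternion.imI_one, Quaternion.imJ_one, Quaternion.imK_one,
        Quaternion.re_zero, Quaternion.imI_zero, Quaternion.imJ_zero, Quaternion.imK_zero,
        qi_re, qi_imI, qi_imJ, qi_imK, qj_re, qj_imI, qj_imJ, qj_imK,
        qk_re, qk_imI, qk_imJ, qk_imK, ContinuousLinearMap.zero_apply, smul_eq_mul, Pi.mul_apply]
      ring
end main

set_option maxHeartbeats 4000000

/-- For `f` obtained from a holomorphic `F = u + iv` by Fueter's construction,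
`-(1/2) Δf = D̄_l (v/r)` on the set of quaternions with nonzero imaginary part, and moreover
`-(1/2) Δf(p) = -(ι(p)/r) (∂f/∂t)(p) + (ι(p)/r²) v(t,r)`. -/
theorem fueter_construction_laplacian
    (F : ℂ → ℂ) (hF : DifferentiableOn ℂ F {z : ℂ | 0 < z.im})
    (f : ℍ[ℝ] → ℍ[ℝ])
    (hf : ∀ p : ℍ[ℝ], Quaternion.im p ≠ 0 →
      f p = ((F ⟨p.re, rad p⟩).re : ℍ[ℝ]) + iot p * ((F ⟨p.re, rad p⟩).im : ℍ[ℝ])) :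
    ∀ p : ℍ[ℝ], Quaternion.im p ≠ 0 →
      (-(1/2) : ℝ) • Lap f p =
        Dlbar (fun q => (((F ⟨q.re, rad q⟩).im / rad q : ℝ) : ℍ[ℝ])) p ∧
      (-(1/2) : ℝ) • Lap f p =
        -(((rad p)⁻¹ • iot p) * pt f p)
          + (((rad p)^2)⁻¹ • iot p) * ((F ⟨p.re, rad p⟩).im : ℍ[ℝ]) := by
  intro p hp
  have hr := rad_pos_s4 hp
  have hRd := hasFDerivAt_rad hp
  have hinv : HasFDerivAt (fun q : ℍ[ℝ] => (rad q)⁻¹) ((-(rad p ^ 2)⁻¹) • dR p) p :=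
    (hasDerivAt_inv hr.ne').comp_hasFDerivAt p hRd
  have hA := hasFDerivAt_aa hF hp
  have hB := hasFDerivAt_bb hF hp
  have hV := hasFDerivAt_vv hF hp
  have hX : HasFDerivAt (fun q : ℍ[ℝ] => q.imI) iL p := iL.hasFDerivAt
  have hY : HasFDerivAt (fun q : ℍ[ℝ] => q.imJ) jL p := jL.hasFDerivAt
  have hZ : HasFDerivAt (fun q : ℍ[ℝ] => q.imK) kL p := kL.hasFDerivAt
  -- second derivative data
  have hDg1 : HasFDerivAt (g1 F) _ p :=
    hasFDerivAt_shape (0 : ℍ[ℝ]) hA (hB.mul hinv) (hasFDerivAt_const (0:ℝ) p)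
  have hDgx : HasFDerivAt (gx F) _ p :=
    hasFDerivAt_shape qi (hB.mul (hX.mul hinv)).neg
      (((hA.mul hX).mul (hinv.mul hinv)).sub
        ((hV.mul hX).mul ((hinv.mul hinv).mul hinv)))
      (hV.mul hinv)
  have hDgy : HasFDerivAt (gy F) _ p :=
    hasFDerivAt_shape qj (hB.mul (hY.mul hinv)).neg
      (((hA.mul hY).mul (hinv.mul hinv)).sub
        ((hV.mul hY).mul ((hinv.mul hinv).mul hinv)))
      (hV.mul hinv)
  have hDgz : HasFDerivAt (gz F) _ p :=
    hasFDerivAt_shape qk (hB.mul (hZ.mul hinv)).neg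
      (((hA.mul hZ).mul (hinv.mul hinv)).sub
        ((hV.mul hZ).mul ((hinv.mul hinv).mul hinv)))
      (hV.mul hinv)
  -- eventually-equal first derivatives
  have e1 : pt f =ᶠ[nhds p] g1 F := by
    filter_upwards [isOpen_S.mem_nhds hp] with q hq
    exact (first_derivs hF hf hq).1
  have ex : px f =ᶠ[nhds p] gx F := by
    filter_upwards [isOpen_S.mem_nhds hp] with q hq
    exact (first_derivs hF hf hq).2.1
  have ey : py f =ᶠ[nhds p] gy F := by
    filter_upwards [isOpen_S.mem_nhds hp] with q hq
    exact (first_derivs hF hf hq).2.2.1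
  have ez : pz f =ᶠ[nhds p] gz F := by
    filter_upwards [isOpen_S.mem_nhds hp] with q hq
    exact (first_derivs hF hf hq).2.2.2
  -- the function on the Dlbar side
  have hgw : HasFDerivAt (fun q : ℍ[ℝ] => (((F ⟨q.re, rad q⟩).im / rad q : ℝ) : ℍ[ℝ]))
      (coeL.comp (vv F p • (-(rad p ^ 2)⁻¹) • dR p
        + (rad p)⁻¹ • (bb F p • reL + aa F p • dR p))) p := by
    have h := coeL.hasFDerivAt.comp p (hV.mul hinv)
    apply h.congr_of_eventuallyEq
    filter_upwards with q
    simp [vv, cq, div_eq_mul_inv]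
  -- second derivative values
  have Vtt : fderiv ℝ (g1 F) p 1 =
      ((((deriv (deriv F) (cq p)).re : ℝ)) : ℍ[ℝ]) + ((deriv (deriv F) (cq p)).im*(rad p)⁻¹) • Quaternion.im p := by
    rw [hDg1.fderiv]
    simp only [ContinuousLinearMap.add_apply, ContinuousLinearMap.comp_apply,
      ContinuousLinearMap.smulRight_apply, ContinuousLinearMap.smul_apply,
      ContinuousLinearMap.sub_apply, ContinuousLinearMap.neg_apply,
      ContinuousLinearMap.zero_apply, coeL_apply, reL_apply, iL_apply, jL_apply, kL_apply,
      dR_apply, imL_apply, smul_eq_mul]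
    rw [Quaternion.ext_iff]
    refine ⟨?_, ?_, ?_, ?_⟩ <;>
    · simp only [Quaternion.re_add, Quaternion.imI_add, Quaternion.imJ_add, Quaternion.imK_add,
        Quaternion.re_sub, Quaternion.imI_sub, Quaternion.imJ_sub, Quaternion.imK_sub,
        Quaternion.re_neg, Quaternion.imI_neg, Quaternion.imJ_neg, Quaternion.imK_neg,
        Quaternion.re_mul, Quaternion.imI_mul, Quaternion.imJ_mul, Quaternion.imK_mul,
        Quaternion.re_smul, Quaternion.imI_smul, Quaternion.imJ_smul, Quaternion.imK_smul,
        Quaternion.re_coe, Quaternion.imI_coe, Quaternion.imJ_coe, Quaternion.imK_coe,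
        Quaternion.re_im, Quaternion.imI_im, Quaternion.imJ_im, Quaternion.imK_im,
        Quaternion.re_one, Quaternion.imI_one, Quaternion.imJ_one, Quaternion.imK_one,
        Quaternion.re_zero, Quaternion.imI_zero, Quaternion.imJ_zero, Quaternion.imK_zero,
        qi_re, qi_imI, qi_imJ, qi_imK, qj_re, qj_imI, qj_imJ, qj_imK,
        qk_re, qk_imI, qk_imJ, qk_imK, smul_eq_mul, g1, gx, gy, gz, iot]
      ring
  have Vxx : fderiv ℝ (gx F) p qi =
      (((-((deriv (deriv F) (cq p)).re*p.imI*p.imI*(rad p)⁻¹^2) - bb F p*(rad p)⁻¹ + bb F p*p.imI*p.imI*(rad p)⁻¹^3 : ℝ)) : ℍ[ℝ])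
      + (-((deriv (deriv F) (cq p)).im*p.imI*p.imI*(rad p)⁻¹^3) + aa F p*(rad p)⁻¹^2 - 3*aa F p*p.imI*p.imI*(rad p)⁻¹^4 - vv F p*(rad p)⁻¹^3 + 3*vv F p*p.imI*p.imI*(rad p)⁻¹^5) • Quaternion.im p
      + (2*aa F p*p.imI*(rad p)⁻¹^2 - 2*vv F p*p.imI*(rad p)⁻¹^3) • qi := by
    rw [hDgx.fderiv]
    simp only [ContinuousLinearMap.add_apply, ContinuousLinearMap.comp_apply,
      ContinuousLinearMap.smulRight_apply, ContinuousLinearMap.smul_apply,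
      ContinuousLinearMap.sub_apply, ContinuousLinearMap.neg_apply,
      ContinuousLinearMap.zero_apply, coeL_apply, reL_apply, iL_apply, jL_apply, kL_apply,
      dR_apply, imL_apply, smul_eq_mul]
    rw [Quaternion.ext_iff]
    refine ⟨?_, ?_, ?_, ?_⟩ <;>
    · simp only [Quaternion.re_add, Quaternion.imI_add, Quaternion.imJ_add, Quaternion.imK_add,
        Quaternion.re_sub, Quaternion.imI_sub, Quaternion.imJ_sub, Quaternion.imK_sub,
        Quaternion.re_neg, Quaternion.imI_neg, Quaternion.imJ_neg, Quaternion.imK_neg,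
        Quaternion.re_mul, Quaternion.imI_mul, Quaternion.imJ_mul, Quaternion.imK_mul,
        Quaternion.re_smul, Quaternion.imI_smul, Quaternion.imJ_smul, Quaternion.imK_smul,
        Quaternion.re_coe, Quaternion.imI_coe, Quaternion.imJ_coe, Quaternion.imK_coe,
        Quaternion.re_im, Quaternion.imI_im, Quaternion.imJ_im, Quaternion.imK_im,
        Quaternion.re_one, Quaternion.imI_one, Quaternion.imJ_one, Quaternion.imK_one,
        Quaternion.re_zero, Quaternion.imI_zero, Quaternion.imJ_zero, Quaternion.imK_zero,
        qi_re, qi_imI, qi_imJ, qi_imK, qj_re, qj_imI, qj_imJ, qj_imK,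
        qk_re, qk_imI, qk_imJ, qk_imK, smul_eq_mul, g1, gx, gy, gz, iot, Pi.mul_apply]
      ring

  have Vyy : fderiv ℝ (gy F) p qj =
      (((-((deriv (deriv F) (cq p)).re*p.imJ*p.imJ*(rad p)⁻¹^2) - bb F p*(rad p)⁻¹ + bb F p*p.imJ*p.imJ*(rad p)⁻¹^3 : ℝ)) : ℍ[ℝ])
      + (-((deriv (deriv F) (cq p)).im*p.imJ*p.imJ*(rad p)⁻¹^3) + aa F p*(rad p)⁻¹^2 - 3*aa F p*p.imJ*p.imJ*(rad p)⁻¹^4 - vv F p*(rad p)⁻¹^3 + 3*vv F p*p.imJ*p.imJ*(rad p)⁻¹^5) • Quaternion.im p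
      + (2*aa F p*p.imJ*(rad p)⁻¹^2 - 2*vv F p*p.imJ*(rad p)⁻¹^3) • qj := by
    rw [hDgy.fderiv]
    simp only [ContinuousLinearMap.add_apply, ContinuousLinearMap.comp_apply,
      ContinuousLinearMap.smulRight_apply, ContinuousLinearMap.smul_apply,
      ContinuousLinearMap.sub_apply, ContinuousLinearMap.neg_apply,
      ContinuousLinearMap.zero_apply, coeL_apply, reL_apply, iL_apply, jL_apply, kL_apply,
      dR_apply, imL_apply, smul_eq_mul]
    rw [Quaternion.ext_iff]
    refine ⟨?_, ?_, ?_, ?_⟩ <;>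
    · simp only [Quaternion.re_add, Quaternion.imI_add, Quaternion.imJ_add, Quaternion.imK_add,
        Quaternion.re_sub, Quaternion.imI_sub, Quaternion.imJ_sub, Quaternion.imK_sub,
        Quaternion.re_neg, Quaternion.imI_neg, Quaternion.imJ_neg, Quaternion.imK_neg,
        Quaternion.re_mul, Quaternion.imI_mul, Quaternion.imJ_mul, Quaternion.imK_mul,
        Quaternion.re_smul, Quaternion.imI_smul, Quaternion.imJ_smul, Quaternion.imK_smul,
        Quaternion.re_coe, Quaternion.imI_coe, Quaternion.imJ_coe, Quaternion.imK_coe,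
        Quaternion.re_im, Quaternion.imI_im, Quaternion.imJ_im, Quaternion.imK_im,
        Quaternion.re_one, Quaternion.imI_one, Quaternion.imJ_one, Quaternion.imK_one,
        Quaternion.re_zero, Quaternion.imI_zero, Quaternion.imJ_zero, Quaternion.imK_zero,
        qi_re, qi_imI, qi_imJ, qi_imK, qj_re, qj_imI, qj_imJ, qj_imK,
        qk_re, qk_imI, qk_imJ, qk_imK, smul_eq_mul, g1, gx, gy, gz, iot, Pi.mul_apply]
      ring

  have Vzz : fderiv ℝ (gz F) p qk =
      (((-((deriv (deriv F) (cq p)).re*p.imK*p.imK*(rad p)⁻¹^2) - bb F p*(rad p)⁻¹ + bb F p*p.imK*p.imK*(rad p)⁻¹^3 : ℝ)) : ℍ[ℝ])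
      + (-((deriv (deriv F) (cq p)).im*p.imK*p.imK*(rad p)⁻¹^3) + aa F p*(rad p)⁻¹^2 - 3*aa F p*p.imK*p.imK*(rad p)⁻¹^4 - vv F p*(rad p)⁻¹^3 + 3*vv F p*p.imK*p.imK*(rad p)⁻¹^5) • Quaternion.im p
      + (2*aa F p*p.imK*(rad p)⁻¹^2 - 2*vv F p*p.imK*(rad p)⁻¹^3) • qk := by
    rw [hDgz.fderiv]
    simp only [ContinuousLinearMap.add_apply, ContinuousLinearMap.comp_apply,
      ContinuousLinearMap.smulRight_apply, ContinuousLinearMap.smul_apply,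
      ContinuousLinearMap.sub_apply, ContinuousLinearMap.neg_apply,
      ContinuousLinearMap.zero_apply, coeL_apply, reL_apply, iL_apply, jL_apply, kL_apply,
      dR_apply, imL_apply, smul_eq_mul]
    rw [Quaternion.ext_iff]
    refine ⟨?_, ?_, ?_, ?_⟩ <;>
    · simp only [Quaternion.re_add, Quaternion.imI_add, Quaternion.imJ_add, Quaternion.imK_add,
        Quaternion.re_sub, Quaternion.imI_sub, Quaternion.imJ_sub, Quaternion.imK_sub,
        Quaternion.re_neg, Quaternion.imI_neg, Quaternion.imJ_neg, Quaternion.imK_neg,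
        Quaternion.re_mul, Quaternion.imI_mul, Quaternion.imJ_mul, Quaternion.imK_mul,
        Quaternion.re_smul, Quaternion.imI_smul, Quaternion.imJ_smul, Quaternion.imK_smul,
        Quaternion.re_coe, Quaternion.imI_coe, Quaternion.imJ_coe, Quaternion.imK_coe,
        Quaternion.re_im, Quaternion.imI_im, Quaternion.imJ_im, Quaternion.imK_im,
        Quaternion.re_one, Quaternion.imI_one, Quaternion.imJ_one, Quaternion.imK_one,
        Quaternion.re_zero, Quaternion.imI_zero, Quaternion.imJ_zero, Quaternion.imK_zero,
        qi_re, qi_imI, qi_imJ, qi_imK, qj_re, qj_imI, qj_imJ, qj_imK,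
        qk_re, qk_imI, qk_imJ, qk_imK, smul_eq_mul, g1, gx, gy, gz, iot, Pi.mul_apply]
      ring

  have hLap : Lap f p = fderiv ℝ (g1 F) p 1 + fderiv ℝ (gx F) p qi
      + fderiv ℝ (gy F) p qj + fderiv ℝ (gz F) p qk := by
    rw [Lap, pt, px, py, pz, e1.fderiv_eq, ex.fderiv_eq, ey.fderiv_eq, ez.fderiv_eq]
  have h1 : rad p * (rad p)⁻¹ = 1 := mul_inv_cancel₀ hr.ne'
  have hs := sq_rad p
  have hLapVal : Lap f p = ((-(2*bb F p*(rad p)⁻¹) : ℝ) : ℍ[ℝ])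
      + (2*aa F p*(rad p)⁻¹^2 - 2*vv F p*(rad p)⁻¹^3) • Quaternion.im p := by
    rw [hLap, Vtt, Vxx, Vyy, Vzz]
    rw [Quaternion.ext_iff]
    refine ⟨?_, ?_, ?_, ?_⟩
    · simp only [Quaternion.re_add, Quaternion.imI_add, Quaternion.imJ_add, Quaternion.imK_add,
        Quaternion.re_sub, Quaternion.imI_sub, Quaternion.imJ_sub, Quaternion.imK_sub,
        Quaternion.re_neg, Quaternion.imI_neg, Quaternion.imJ_neg, Quaternion.imK_neg,
        Quaternion.re_mul, Quaternion.imI_mul, Quaternion.imJ_mul, Quaternion.imK_mul,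
        Quaternion.re_smul, Quaternion.imI_smul, Quaternion.imJ_smul, Quaternion.imK_smul,
        Quaternion.re_coe, Quaternion.imI_coe, Quaternion.imJ_coe, Quaternion.imK_coe,
        Quaternion.re_im, Quaternion.imI_im, Quaternion.imJ_im, Quaternion.imK_im,
        Quaternion.re_one, Quaternion.imI_one, Quaternion.imJ_one, Quaternion.imK_one,
        Quaternion.re_zero, Quaternion.imI_zero, Quaternion.imJ_zero, Quaternion.imK_zero,
        qi_re, qi_imI, qi_imJ, qi_imK, qj_re, qj_imI, qj_imJ, qj_imK,
        qk_re, qk_imI, qk_imJ, qk_imK, smul_eq_mul, g1, gx, gy, gz, iot]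
      linear_combination (-(((deriv (deriv F) (cq p)).re) - bb F p*(rad p)⁻¹)*(1 + rad p*(rad p)⁻¹))*h1
        + ((((deriv (deriv F) (cq p)).re) - bb F p*(rad p)⁻¹)*(rad p)⁻¹^2)*hs
    · simp only [Quaternion.re_add, Quaternion.imI_add, Quaternion.imJ_add, Quaternion.imK_add,
        Quaternion.re_sub, Quaternion.imI_sub, Quaternion.imJ_sub, Quaternion.imK_sub,
        Quaternion.re_neg, Quaternion.imI_neg, Quaternion.imJ_neg, Quaternion.imK_neg,
        Quaternion.re_mul, Quaternion.imI_mul, Quaternion.imJ_mul, Quaternion.imK_mul,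
        Quaternion.re_smul, Quaternion.imI_smul, Quaternion.imJ_smul, Quaternion.imK_smul,
        Quaternion.re_coe, Quaternion.imI_coe, Quaternion.imJ_coe, Quaternion.imK_coe,
        Quaternion.re_im, Quaternion.imI_im, Quaternion.imJ_im, Quaternion.imK_im,
        Quaternion.re_one, Quaternion.imI_one, Quaternion.imJ_one, Quaternion.imK_one,
        Quaternion.re_zero, Quaternion.imI_zero, Quaternion.imJ_zero, Quaternion.imK_zero,
        qi_re, qi_imI, qi_imJ, qi_imK, qj_re, qj_imI, qj_imJ, qj_imK,
        qk_re, qk_imI, qk_imJ, qk_imK, smul_eq_mul, g1, gx, gy, gz, iot]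
      linear_combination (-(p.imI*((deriv (deriv F) (cq p)).im*(rad p)⁻¹ + 3*aa F p*(rad p)⁻¹^2 - 3*vv F p*(rad p)⁻¹^3))*(1 + rad p*(rad p)⁻¹))*h1
        + (p.imI*((deriv (deriv F) (cq p)).im*(rad p)⁻¹ + 3*aa F p*(rad p)⁻¹^2 - 3*vv F p*(rad p)⁻¹^3)*(rad p)⁻¹^2)*hs
    · simp only [Quaternion.re_add, Quaternion.imI_add, Quaternion.imJ_add, Quaternion.imK_add,
        Quaternion.re_sub, Quaternion.imI_sub, Quaternion.imJ_sub, Quaternion.imK_sub,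
        Quaternion.re_neg, Quaternion.imI_neg, Quaternion.imJ_neg, Quaternion.imK_neg,
        Quaternion.re_mul, Quaternion.imI_mul, Quaternion.imJ_mul, Quaternion.imK_mul,
        Quaternion.re_smul, Quaternion.imI_smul, Quaternion.imJ_smul, Quaternion.imK_smul,
        Quaternion.re_coe, Quaternion.imI_coe, Quaternion.imJ_coe, Quaternion.imK_coe,
        Quaternion.re_im, Quaternion.imI_im, Quaternion.imJ_im, Quaternion.imK_im,
        Quaternion.re_one, Quaternion.imI_one, Quaternion.imJ_one, Quaternion.imK_one,
        Quaternion.re_zero, Quaternion.imI_zero, Quaternion.imJ_zero, Quaternion.imK_zero,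
        qi_re, qi_imI, qi_imJ, qi_imK, qj_re, qj_imI, qj_imJ, qj_imK,
        qk_re, qk_imI, qk_imJ, qk_imK, smul_eq_mul, g1, gx, gy, gz, iot]
      linear_combination (-(p.imJ*((deriv (deriv F) (cq p)).im*(rad p)⁻¹ + 3*aa F p*(rad p)⁻¹^2 - 3*vv F p*(rad p)⁻¹^3))*(1 + rad p*(rad p)⁻¹))*h1
        + (p.imJ*((deriv (deriv F) (cq p)).im*(rad p)⁻¹ + 3*aa F p*(rad p)⁻¹^2 - 3*vv F p*(rad p)⁻¹^3)*(rad p)⁻¹^2)*hs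
    · simp only [Quaternion.re_add, Quaternion.imI_add, Quaternion.imJ_add, Quaternion.imK_add,
        Quaternion.re_sub, Quaternion.imI_sub, Quaternion.imJ_sub, Quaternion.imK_sub,
        Quaternion.re_neg, Quaternion.imI_neg, Quaternion.imJ_neg, Quaternion.imK_neg,
        Quaternion.re_mul, Quaternion.imI_mul, Quaternion.imJ_mul, Quaternion.imK_mul,
        Quaternion.re_smul, Quaternion.imI_smul, Quaternion.imJ_smul, Quaternion.imK_smul,
        Quaternion.re_coe, Quaternion.imI_coe, Quaternion.imJ_coe, Quaternion.imK_coe,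
        Quaternion.re_im, Quaternion.imI_im, Quaternion.imJ_im, Quaternion.imK_im,
        Quaternion.re_one, Quaternion.imI_one, Quaternion.imJ_one, Quaternion.imK_one,
        Quaternion.re_zero, Quaternion.imI_zero, Quaternion.imJ_zero, Quaternion.imK_zero,
        qi_re, qi_imI, qi_imJ, qi_imK, qj_re, qj_imI, qj_imJ, qj_imK,
        qk_re, qk_imI, qk_imJ, qk_imK, smul_eq_mul, g1, gx, gy, gz, iot]
      linear_combination (-(p.imK*((deriv (deriv F) (cq p)).im*(rad p)⁻¹ + 3*aa F p*(rad p)⁻¹^2 - 3*vv F p*(rad p)⁻¹^3))*(1 + rad p*(rad p)⁻¹))*h1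
        + (p.imK*((deriv (deriv F) (cq p)).im*(rad p)⁻¹ + 3*aa F p*(rad p)⁻¹^2 - 3*vv F p*(rad p)⁻¹^3)*(rad p)⁻¹^2)*hs
  constructor
  · rw [hLapVal, Dlbar, pt, px, py, pz, hgw.fderiv]
    simp only [ContinuousLinearMap.add_apply, ContinuousLinearMap.comp_apply,
      ContinuousLinearMap.smulRight_apply, ContinuousLinearMap.smul_apply,
      ContinuousLinearMap.sub_apply, ContinuousLinearMap.neg_apply,
      ContinuousLinearMap.zero_apply, coeL_apply, reL_apply, iL_apply, jL_apply, kL_apply,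
      dR_apply, imL_apply, smul_eq_mul]
    rw [Quaternion.ext_iff]
    refine ⟨?_, ?_, ?_, ?_⟩ <;>
    · simp only [Quaternion.re_add, Quaternion.imI_add, Quaternion.imJ_add, Quaternion.imK_add,
        Quaternion.re_sub, Quaternion.imI_sub, Quaternion.imJ_sub, Quaternion.imK_sub,
        Quaternion.re_neg, Quaternion.imI_neg, Quaternion.imJ_neg, Quaternion.imK_neg,
        Quaternion.re_mul, Quaternion.imI_mul, Quaternion.imJ_mul, Quaternion.imK_mul,
        Quaternion.re_smul, Quaternion.imI_smul, Quaternion.imJ_smul, Quaternion.imK_smul,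
        Quaternion.re_coe, Quaternion.imI_coe, Quaternion.imJ_coe, Quaternion.imK_coe,
        Quaternion.re_im, Quaternion.imI_im, Quaternion.imJ_im, Quaternion.imK_im,
        Quaternion.re_one, Quaternion.imI_one, Quaternion.imJ_one, Quaternion.imK_one,
        Quaternion.re_zero, Quaternion.imI_zero, Quaternion.imJ_zero, Quaternion.imK_zero,
        qi_re, qi_imI, qi_imJ, qi_imK, qj_re, qj_imI, qj_imJ, qj_imK,
        qk_re, qk_imI, qk_imJ, qk_imK, smul_eq_mul, g1, gx, gy, gz, iot]
      ring
  · rw [hLapVal, (first_derivs hF hf hp).1,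
      show (F ⟨p.re, rad p⟩).im = vv F p from rfl]
    rw [Quaternion.ext_iff]
    refine ⟨?_, ?_, ?_, ?_⟩
    · simp only [Quaternion.re_add, Quaternion.imI_add, Quaternion.imJ_add, Quaternion.imK_add,
        Quaternion.re_sub, Quaternion.imI_sub, Quaternion.imJ_sub, Quaternion.imK_sub,
        Quaternion.re_neg, Quaternion.imI_neg, Quaternion.imJ_neg, Quaternion.imK_neg,
        Quaternion.re_mul, Quaternion.imI_mul, Quaternion.imJ_mul, Quaternion.imK_mul,
        Quaternion.re_smul, Quaternion.imI_smul, Quaternion.imJ_smul, Quaternion.imK_smul,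
        Quaternion.re_coe, Quaternion.imI_coe, Quaternion.imJ_coe, Quaternion.imK_coe,
        Quaternion.re_im, Quaternion.imI_im, Quaternion.imJ_im, Quaternion.imK_im,
        Quaternion.re_one, Quaternion.imI_one, Quaternion.imJ_one, Quaternion.imK_one,
        Quaternion.re_zero, Quaternion.imI_zero, Quaternion.imJ_zero, Quaternion.imK_zero,
        qi_re, qi_imI, qi_imJ, qi_imK, qj_re, qj_imI, qj_imJ, qj_imK,
        qk_re, qk_imI, qk_imJ, qk_imK, smul_eq_mul, g1, gx, gy, gz, iot]
      linear_combination (-(bb F p*(rad p)⁻¹)*(1 + rad p*(rad p)⁻¹))*h1 + (bb F p*(rad p)⁻¹^3)*hs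
    · simp only [Quaternion.re_add, Quaternion.imI_add, Quaternion.imJ_add, Quaternion.imK_add,
        Quaternion.re_sub, Quaternion.imI_sub, Quaternion.imJ_sub, Quaternion.imK_sub,
        Quaternion.re_neg, Quaternion.imI_neg, Quaternion.imJ_neg, Quaternion.imK_neg,
        Quaternion.re_mul, Quaternion.imI_mul, Quaternion.imJ_mul, Quaternion.imK_mul,
        Quaternion.re_smul, Quaternion.imI_smul, Quaternion.imJ_smul, Quaternion.imK_smul,
        Quaternion.re_coe, Quaternion.imI_coe, Quaternion.imJ_coe, Quaternion.imK_coe,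
        Quaternion.re_im, Quaternion.imI_im, Quaternion.imJ_im, Quaternion.imK_im,
        Quaternion.re_one, Quaternion.imI_one, Quaternion.imJ_one, Quaternion.imK_one,
        Quaternion.re_zero, Quaternion.imI_zero, Quaternion.imJ_zero, Quaternion.imK_zero,
        qi_re, qi_imI, qi_imJ, qi_imK, qj_re, qj_imI, qj_imJ, qj_imK,
        qk_re, qk_imI, qk_imJ, qk_imK, smul_eq_mul, g1, gx, gy, gz, iot]
      ring
    · simp only [Quaternion.re_add, Quaternion.imI_add, Quaternion.imJ_add, Quaternion.imK_add,
        Quaternion.re_sub, Quaternion.imI_sub, Quaternion.imJ_sub, Quaternion.imK_sub,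
        Quaternion.re_neg, Quaternion.imI_neg, Quaternion.imJ_neg, Quaternion.imK_neg,
        Quaternion.re_mul, Quaternion.imI_mul, Quaternion.imJ_mul, Quaternion.imK_mul,
        Quaternion.re_smul, Quaternion.imI_smul, Quaternion.imJ_smul, Quaternion.imK_smul,
        Quaternion.re_coe, Quaternion.imI_coe, Quaternion.imJ_coe, Quaternion.imK_coe,
        Quaternion.re_im, Quaternion.imI_im, Quaternion.imJ_im, Quaternion.imK_im,
        Quaternion.re_one, Quaternion.imI_one, Quaternion.imJ_one, Quaternion.imK_one,
        Quaternion.re_zero, Quaternion.imI_zero, Quaternion.imJ_zero, Quaternion.imK_zero,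
        qi_re, qi_imI, qi_imJ, qi_imK, qj_re, qj_imI, qj_imJ, qj_imK,
        qk_re, qk_imI, qk_imJ, qk_imK, smul_eq_mul, g1, gx, gy, gz, iot]
      ring
    · simp only [Quaternion.re_add, Quaternion.imI_add, Quaternion.imJ_add, Quaternion.imK_add,
        Quaternion.re_sub, Quaternion.imI_sub, Quaternion.imJ_sub, Quaternion.imK_sub,
        Quaternion.re_neg, Quaternion.imI_neg, Quaternion.imJ_neg, Quaternion.imK_neg,
        Quaternion.re_mul, Quaternion.imI_mul, Quaternion.imJ_mul, Quaternion.imK_mul,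
        Quaternion.re_smul, Quaternion.imI_smul, Quaternion.imJ_smul, Quaternion.imK_smul,
        Quaternion.re_coe, Quaternion.imI_coe, Quaternion.imJ_coe, Quaternion.imK_coe,
        Quaternion.re_im, Quaternion.imI_im, Quaternion.imJ_im, Quaternion.imK_im,
        Quaternion.re_one, Quaternion.imI_one, Quaternion.imJ_one, Quaternion.imK_one,
        Quaternion.re_zero, Quaternion.imI_zero, Quaternion.imJ_zero, Quaternion.imK_zero,
        qi_re, qi_imI, qi_imJ, qi_imK, qj_re, qj_imI, qj_imJ, qj_imK,
        qk_re, qk_imI, qk_imJ, qk_imK, smul_eq_mul, g1, gx, gy, gz, iot]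
      ring
end
end

section
/- Let u, v be real-valued C¹ functions of (α,β) on a region where sin β ≠ 0, and let F = u + ι(α,β)·v. Then ∂F/∂ιₗ = 2v holds if and only if the Cauchy–Riemann type system (1/sin β)·∂u/∂α = ∂v/∂β and (1/sin β)·∂v/∂α = −∂u/∂β holds. -/
open Quaternion

noncomputable section

/-- `ι(α,β) = cos α sin β · i + sin α sin β · j + cos β · k`, a unit imaginary quaternion. -/
def iota (α β : ℝ) : ℍ[ℝ] :=
  ⟨0, Real.cos α * Real.sin β, Real.sin α * Real.sin β, Real.cos β⟩
/-- `ι_α = ∂ι/∂α`. -/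
def iotaA (α β : ℝ) : ℍ[ℝ] := deriv (fun a => iota a β) α
/-- `ι_β = ∂ι/∂β`. -/
def iotaB (α β : ℝ) : ℍ[ℝ] := deriv (fun b => iota α b) β

/-- Partial derivative in `α` of a quaternion-valued function of `(α,β)`. -/
def pA (g : ℝ → ℝ → ℍ[ℝ]) (α β : ℝ) : ℍ[ℝ] := deriv (fun a => g a β) α
/-- Partial derivative in `β` of a quaternion-valued function of `(α,β)`. -/
def pB (g : ℝ → ℝ → ℍ[ℝ]) (α β : ℝ) : ℍ[ℝ] := deriv (fun b => g α b) β
/-- The left angular derivative `∂g/∂ιₗ := ι_α⁻¹ (∂g/∂α) + ι_β⁻¹ (∂g/∂β)`. -/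
def DI (g : ℝ → ℝ → ℍ[ℝ]) (α β : ℝ) : ℍ[ℝ] :=
  (iotaA α β)⁻¹ * pA g α β + (iotaB α β)⁻¹ * pB g α β

/- ### Auxiliary material -/

def mkQ (a b c d : ℝ) : ℍ[ℝ] := ⟨a, b, c, d⟩
@[simp] lemma mkQ_re (a b c d : ℝ) : (mkQ a b c d).re = a := rfl
@[simp] lemma mkQ_imI (a b c d : ℝ) : (mkQ a b c d).imI = b := rfl
@[simp] lemma mkQ_imJ (a b c d : ℝ) : (mkQ a b c d).imJ = c := rfl
@[simp] lemma mkQ_imK (a b c d : ℝ) : (mkQ a b c d).imK = d := rfl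

lemma hasDerivAt_iota_a (α β : ℝ) : HasDerivAt (fun a => iota a β)
    (mkQ 0 (-Real.sin α * Real.sin β) (Real.cos α * Real.sin β) 0) α := by
  have h : ∀ a, iota a β = (Real.cos a * Real.sin β) • mkQ 0 1 0 0
      + (Real.sin a * Real.sin β) • mkQ 0 0 1 0 + Real.cos β • mkQ 0 0 0 1 := by
    intro a; ext <;> simp [iota]
  simp only [h]
  have := ((((Real.hasDerivAt_cos α).mul_const (Real.sin β)).smul_const
      (mkQ 0 1 0 0)).add (((Real.hasDerivAt_sin α).mul_const (Real.sin β)).smul_const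
      (mkQ 0 0 1 0))).add (hasDerivAt_const α (Real.cos β • mkQ 0 0 0 1))
  refine this.congr_deriv ?_
  ext <;> simp

lemma hasDerivAt_iota_b (α β : ℝ) : HasDerivAt (fun b => iota α b)
    (mkQ 0 (Real.cos α * Real.cos β) (Real.sin α * Real.cos β) (-Real.sin β)) β := by
  have h : ∀ b, iota α b = (Real.cos α * Real.sin b) • mkQ 0 1 0 0
      + (Real.sin α * Real.sin b) • mkQ 0 0 1 0 + Real.cos b • mkQ 0 0 0 1 := by
    intro b; ext <;> simp [iota]
  simp only [h]
  have := (((((Real.hasDerivAt_sin β).const_mul (Real.cos α)).smul_const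
      (mkQ 0 1 0 0)).add ((((Real.hasDerivAt_sin β).const_mul (Real.sin α))).smul_const
      (mkQ 0 0 1 0))).add ((Real.hasDerivAt_cos β).smul_const (mkQ 0 0 0 1)))
  refine this.congr_deriv ?_
  ext <;> simp

lemma coe_hasDerivAt {f : ℝ → ℝ} {f' x : ℝ} (h : HasDerivAt f f' x) :
    HasDerivAt (fun a => ((f a : ℝ) : ℍ[ℝ])) ((f' : ℝ) : ℍ[ℝ]) x := by
  have := h.smul_const (1 : ℍ[ℝ])
  simpa [← Quaternion.coe_one, Quaternion.smul_coe] using this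

lemma inv_qA {α β : ℝ} (hβ : Real.sin β ≠ 0) :
    (mkQ 0 (-Real.sin α * Real.sin β) (Real.cos α * Real.sin β) 0)⁻¹
      = mkQ 0 ((Real.sin β)⁻¹ * Real.sin α) (-((Real.sin β)⁻¹ * Real.cos α)) 0 := by
  symm
  apply eq_inv_of_mul_eq_one_left
  ext <;> simp [Quaternion.re_mul, Quaternion.imI_mul, Quaternion.imJ_mul,
    Quaternion.imK_mul] <;>
    first
    | ring1
    | (field_simp; linear_combination Real.sin_sq_add_cos_sq α)

lemma inv_qB {α β : ℝ} :
    (mkQ 0 (Real.cos α * Real.cos β) (Real.sin α * Real.cos β) (-Real.sin β))⁻¹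
      = mkQ 0 (-(Real.cos α * Real.cos β)) (-(Real.sin α * Real.cos β)) (Real.sin β) := by
  symm
  apply eq_inv_of_mul_eq_one_left
  ext <;> simp [Quaternion.re_mul, Quaternion.imI_mul, Quaternion.imJ_mul,
    Quaternion.imK_mul] <;>
    first
    | ring1
    | linear_combination (Real.cos β)^2 * Real.sin_sq_add_cos_sq α + Real.sin_sq_add_cos_sq β

set_option maxHeartbeats 2000000 in
/-- For real-valued `C¹` functions `u, v` of `(α,β)` on a region where
`sin β ≠ 0` and `F = u + ι v`, the equation `∂F/∂ιₗ = 2v` holds iff the Cauchy–Riemann type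
system `(1/sin β) ∂u/∂α = ∂v/∂β` and `(1/sin β) ∂v/∂α = -∂u/∂β` holds. -/
theorem angular_deriv_eq_iff_CR (S : Set (ℝ × ℝ)) (hS : IsOpen S)
    (hSsin : ∀ x ∈ S, Real.sin x.2 ≠ 0)
    (u v : ℝ → ℝ → ℝ)
    (hu : ContDiffOn ℝ 1 (fun x : ℝ × ℝ => u x.1 x.2) S)
    (hv : ContDiffOn ℝ 1 (fun x : ℝ × ℝ => v x.1 x.2) S) :
    ∀ x ∈ S,
      (DI (fun a b => ((u a b : ℝ) : ℍ[ℝ]) + iota a b * ((v a b : ℝ) : ℍ[ℝ])) x.1 x.2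
          = ((2 * v x.1 x.2 : ℝ) : ℍ[ℝ]))
      ↔ ((Real.sin x.2)⁻¹ * deriv (fun a => u a x.2) x.1 = deriv (fun b => v x.1 b) x.2 ∧
         (Real.sin x.2)⁻¹ * deriv (fun a => v a x.2) x.1 = - deriv (fun b => u x.1 b) x.2) := by
  rintro ⟨α, β⟩ hx
  dsimp only
  have hsβ : Real.sin β ≠ 0 := hSsin (α, β) hx
  have hud : DifferentiableAt ℝ (fun x : ℝ × ℝ => u x.1 x.2) (α, β) :=
    (hu.differentiableOn one_ne_zero).differentiableAt (hS.mem_nhds hx)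
  have hvd : DifferentiableAt ℝ (fun x : ℝ × ℝ => v x.1 x.2) (α, β) :=
    (hv.differentiableOn one_ne_zero).differentiableAt (hS.mem_nhds hx)
  have hua : HasDerivAt (fun a => u a β) (deriv (fun a => u a β) α) α :=
    (hud.comp (f := fun a => (a, β)) α (differentiableAt_id.prodMk (differentiableAt_const β))).hasDerivAt
  have hub : HasDerivAt (fun b => u α b) (deriv (fun b => u α b) β) β :=
    (hud.comp (f := fun b => (α, b)) β ((differentiableAt_const α).prodMk differentiableAt_id)).hasDerivAt
  have hva : HasDerivAt (fun a => v a β) (deriv (fun a => v a β) α) α :=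
    (hvd.comp (f := fun a => (a, β)) α (differentiableAt_id.prodMk (differentiableAt_const β))).hasDerivAt
  have hvb : HasDerivAt (fun b => v α b) (deriv (fun b => v α b) β) β :=
    (hvd.comp (f := fun b => (α, b)) β ((differentiableAt_const α).prodMk differentiableAt_id)).hasDerivAt
  set uA := deriv (fun a => u a β) α with huA
  set uB := deriv (fun b => u α b) β with huB
  set vA := deriv (fun a => v a β) α with hvA
  set vB := deriv (fun b => v α b) β with hvB
  set sα := Real.sin α; set cα := Real.cos α
  set sβ := Real.sin β; set cβ := Real.cos β
  have hPA : HasDerivAt (fun a => ((u a β : ℝ) : ℍ[ℝ]) + iota a β * ((v a β : ℝ) : ℍ[ℝ]))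
      ((uA : ℍ[ℝ]) + (mkQ 0 (-sα * sβ) (cα * sβ) 0 * ((v α β : ℝ) : ℍ[ℝ])
        + iota α β * (vA : ℍ[ℝ]))) α :=
    (coe_hasDerivAt hua).add ((hasDerivAt_iota_a α β).mul (coe_hasDerivAt hva))
  have hPB : HasDerivAt (fun b => ((u α b : ℝ) : ℍ[ℝ]) + iota α b * ((v α b : ℝ) : ℍ[ℝ]))
      ((uB : ℍ[ℝ]) + (mkQ 0 (cα * cβ) (sα * cβ) (-sβ) * ((v α β : ℝ) : ℍ[ℝ])
        + iota α β * (vB : ℍ[ℝ]))) β :=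
    (coe_hasDerivAt hub).add ((hasDerivAt_iota_b α β).mul (coe_hasDerivAt hvb))
  have hpAe : pA (fun a b => ((u a b : ℝ) : ℍ[ℝ]) + iota a b * ((v a b : ℝ) : ℍ[ℝ])) α β
      = (uA : ℍ[ℝ]) + (mkQ 0 (-sα * sβ) (cα * sβ) 0 * ((v α β : ℝ) : ℍ[ℝ])
        + iota α β * (vA : ℍ[ℝ])) := hPA.deriv
  have hpBe : pB (fun a b => ((u a b : ℝ) : ℍ[ℝ]) + iota a b * ((v a b : ℝ) : ℍ[ℝ])) α β
      = (uB : ℍ[ℝ]) + (mkQ 0 (cα * cβ) (sα * cβ) (-sβ) * ((v α β : ℝ) : ℍ[ℝ])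
        + iota α β * (vB : ℍ[ℝ])) := hPB.deriv
  have hiA : iotaA α β = mkQ 0 (-sα * sβ) (cα * sβ) 0 := (hasDerivAt_iota_a α β).deriv
  have hiB : iotaB α β = mkQ 0 (cα * cβ) (sα * cβ) (-sβ) := (hasDerivAt_iota_b α β).deriv
  have hio : iota α β = mkQ 0 (cα * sβ) (sα * sβ) cβ := rfl
  rw [DI, hpAe, hpBe, hiA, hiB, inv_qA hsβ, inv_qB, hio]
  rw [Quaternion.ext_iff]
  simp only [Quaternion.re_mul, Quaternion.imI_mul, Quaternion.imJ_mul, Quaternion.imK_mul,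
    Quaternion.re_add, Quaternion.imI_add, Quaternion.imJ_add, Quaternion.imK_add,
    mkQ_re, mkQ_imI, mkQ_imJ, mkQ_imK, Quaternion.re_coe, Quaternion.imI_coe,
    Quaternion.imJ_coe, Quaternion.imK_coe]
  have hts : sβ * sβ⁻¹ = 1 := mul_inv_cancel₀ hsβ
  have pa : sα ^ 2 + cα ^ 2 = 1 := Real.sin_sq_add_cos_sq α
  have pb : sβ ^ 2 + cβ ^ 2 = 1 := Real.sin_sq_add_cos_sq β
  constructor
  · rintro ⟨h1, h2, h3, h4⟩
    constructor
    · linear_combination sα * h2 - cα * h3 + (sα ^ 2 * vB + cα ^ 2 * vB) * pb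
        - (sβ⁻¹ * uA - vB) * pa
    · linear_combination sβ⁻¹ * h4 - (sβ⁻¹ * (cα ^ 2 * vA + sα ^ 2 * vA) + uB) * hts
        - sβ⁻¹ * vA * pa
  · rintro ⟨hcr1, hcr2⟩
    refine ⟨?_, ?_, ?_, ?_⟩
    · linear_combination (cα ^ 2 * v α β + sα ^ 2 * v α β) * hts
        + (v α β + cβ ^ 2 * v α β + sβ * cβ * vB) * pa + v α β * pb
    · linear_combination sα * hcr1 - cα * cβ * hcr2 - sα * vB * pb
    · linear_combination (-cα) * hcr1 - sα * cβ * hcr2 + cα * vB * pb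
    · linear_combination (cα ^ 2 * vA + sα ^ 2 * vA - vA) * hts + vA * pa + sβ * hcr2
end
end
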